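/- arXiv:2501.02695 — 4 statements merged into one kernel-verified Lean document; each statement's English description precedes it below -/
import Mathlib

section
/- Let M > 0 and let G be a simple graph containing no circuit of even length at most 2M. Then any two distinct cycles of odd length at most M in G are vertex-disjoint. -/
/-- The list of edges of the closed walk determined by the vertex list `l`. -/
def circuitEdgeList {V : Type*} (l : List V) : List (Sym2 V) :=
  (l.zip (l.rotate 1)).map fun p => s(p.1, p.2)

/-- `E` is the edge set of a circuit of length `k` in `G` : there are (not necessarily
distinct) vertices `v_1, …, v_k` such that the `k` edges
`{v_1,v_2}, {v_2,v_3}, …, {v_k,v_1}` all lie in `G`, are pairwise distinct, and make up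
`E`. -/
def IsCircuit {V : Type*} (G : SimpleGraph V) (k : ℕ) (E : Set (Sym2 V)) : Prop :=
  ∃ l : List V, l.length = k ∧ l ≠ [] ∧
    (∀ p ∈ l.zip (l.rotate 1), G.Adj p.1 p.2) ∧
    (circuitEdgeList l).Nodup ∧
    E = {e | e ∈ circuitEdgeList l}

/-- `E` is the edge set of a cycle of length `k` in `G` : as for a circuit, but the
vertices `v_1, …, v_k` are pairwise distinct. -/
def IsCycle {V : Type*} (G : SimpleGraph V) (k : ℕ) (E : Set (Sym2 V)) : Prop :=
  ∃ l : List V, l.length = k ∧ l ≠ [] ∧ l.Nodup ∧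
    (∀ p ∈ l.zip (l.rotate 1), G.Adj p.1 p.2) ∧
    (circuitEdgeList l).Nodup ∧
    E = {e | e ∈ circuitEdgeList l}


section Helpers
variable {V : Type*}

def pathEdges (l : List V) : List (Sym2 V) :=
  l.zipWith (fun a b => s(a, b)) l.tail

@[simp] lemma pathEdges_nil : pathEdges ([] : List V) = [] := rfl
@[simp] lemma pathEdges_single (a : V) : pathEdges [a] = [] := rfl
@[simp] lemma pathEdges_cons_cons (a b : V) (t : List V) :
    pathEdges (a :: b :: t) = s(a, b) :: pathEdges (b :: t) := rfl

lemma length_pathEdges (l : List V) : (pathEdges l).length = l.length - 1 := by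
  match l with
  | [] => rfl
  | [a] => rfl
  | a :: b :: t => simp [pathEdges_cons_cons, length_pathEdges (b :: t)]

lemma pathEdges_split (u : List V) (w : V) (z : List V) :
    pathEdges (u ++ w :: z) = pathEdges (u ++ [w]) ++ pathEdges (w :: z) := by
  match u with
  | [] => simp
  | [a] => simp
  | a :: b :: t =>
    have := pathEdges_split (b :: t) w z
    simp only [List.cons_append, pathEdges_cons_cons] at *
    rw [this]

lemma pathEdges_concat (u : List V) (a c : V) :
    pathEdges (u ++ [a, c]) = pathEdges (u ++ [a]) ++ [s(a, c)] := by
  have := pathEdges_split u a [c]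
  simpa using this

lemma pathEdges_reverse (l : List V) : pathEdges l.reverse = (pathEdges l).reverse := by
  match l with
  | [] => rfl
  | [a] => rfl
  | a :: b :: t =>
    have ih := pathEdges_reverse (b :: t)
    have h1 : (a :: b :: t).reverse = (b :: t).reverse ++ [a] := by simp
    have h2 : (b :: t).reverse = t.reverse ++ [b] := by simp
    rw [h1, h2, List.append_assoc]
    rw [show ([b] ++ [a] : List V) = [b, a] from rfl]
    rw [pathEdges_concat, ← h2, ih]
    simp [Sym2.eq_swap]

lemma mem_of_mem_pathEdges {l : List V} {e : Sym2 V} {w : V}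
    (he : e ∈ pathEdges l) (hw : w ∈ e) : w ∈ l := by
  match l with
  | [] => simp at he
  | [a] => simp at he
  | a :: b :: t =>
    rcases List.mem_cons.1 he with rfl | he
    · rcases Sym2.mem_iff.1 hw with rfl | rfl
      · exact List.mem_cons_self
      · exact List.mem_cons_of_mem _ (List.mem_cons_self)
    · exact List.mem_cons_of_mem _ (mem_of_mem_pathEdges he hw)

lemma zip_map_eq_pathEdges (t : List V) (a c : V) :
    (((a :: t).zip (t ++ [c])).map fun p => s(p.1, p.2)) = pathEdges (a :: (t ++ [c])) := by
  match t with
  | [] => rfl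
  | b :: t' =>
    have ih := zip_map_eq_pathEdges t' b c
    simp only [List.cons_append, List.zip_cons_cons, List.map_cons, pathEdges_cons_cons]
    rw [← ih]

lemma circuitEdgeList_cons (a : V) (t : List V) :
    circuitEdgeList (a :: t) = pathEdges ((a :: t) ++ [a]) := by
  have hrot : (a :: t).rotate 1 = t ++ [a] := by
    rw [List.rotate_cons_succ, List.rotate_zero]
  rw [circuitEdgeList, hrot, zip_map_eq_pathEdges]
  rfl

lemma length_circuitEdgeList (l : List V) : (circuitEdgeList l).length = l.length := by
  simp [circuitEdgeList, List.length_zip]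

lemma circuitEdgeList_rotate_one (l : List V) :
    circuitEdgeList (l.rotate 1) = (circuitEdgeList l).rotate 1 := by
  match l with
  | [] => rfl
  | [a] =>
    simp [circuitEdgeList, List.rotate_singleton]
  | a :: b :: t =>
    have hrot : (a :: b :: t).rotate 1 = b :: (t ++ [a]) := by
      rw [List.rotate_cons_succ, List.rotate_zero]; rfl
    rw [hrot, circuitEdgeList_cons, circuitEdgeList_cons]
    have h1 : (b :: (t ++ [a])) ++ [b] = (b :: t) ++ [a, b] := by simp
    rw [h1, pathEdges_concat]
    have h2 : ((a :: b :: t) ++ [a]) = a :: ((b :: t) ++ [a]) := by simp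
    rw [h2]
    have h3 : pathEdges (a :: ((b :: t) ++ [a])) = s(a, b) :: pathEdges ((b :: t) ++ [a]) := rfl
    rw [h3, List.rotate_cons_succ, List.rotate_zero, Sym2.eq_swap]

lemma circuitEdgeList_rotate (l : List V) (n : ℕ) :
    circuitEdgeList (l.rotate n) = (circuitEdgeList l).rotate n := by
  induction n with
  | zero => simp
  | succ n ih =>
    rw [← List.rotate_rotate l n 1, circuitEdgeList_rotate_one, ih, List.rotate_rotate]

lemma edge_mem_edgeSet {G : SimpleGraph V} {l : List V}
    (h : ∀ p ∈ l.zip (l.rotate 1), G.Adj p.1 p.2) :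
    ∀ e ∈ circuitEdgeList l, e ∈ G.edgeSet := by
  intro e he
  rcases List.mem_map.1 he with ⟨pr, hpr, rfl⟩
  exact G.mem_edgeSet.2 (h pr hpr)

lemma buildCircuit (G : SimpleGraph V) (p : List V) (h2 : 2 ≤ p.length)
    (hcl : p.head? = p.getLast?)
    (hadj : ∀ e ∈ pathEdges p, e ∈ G.edgeSet)
    (hnd : (pathEdges p).Nodup) :
    IsCircuit G (p.length - 1) {e | e ∈ pathEdges p} := by
  match p with
  | a :: b :: t =>
    set l : List V := (a :: b :: t).dropLast with hl
    have hlast : (a :: b :: t).getLast (by simp) = a := by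
      have := List.getLast?_eq_getLast (l := a :: b :: t) (by simp)
      rw [this] at hcl
      simpa using hcl.symm
    have hp : l ++ [a] = a :: b :: t := by
      have h' := List.dropLast_append_getLast (l := a :: b :: t) (by simp)
      rw [hlast] at h'
      exact h'
    have hlcons : ∃ t', l = a :: t' := ⟨(b :: t).dropLast, rfl⟩
    obtain ⟨t', ht'⟩ := hlcons
    have hcel : circuitEdgeList l = pathEdges (a :: b :: t) := by
      rw [ht', circuitEdgeList_cons, ← ht', hp]
    refine ⟨l, ?_, by simp [ht'], ?_, by rw [hcel]; exact hnd, ?_⟩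
    · rw [ht'] at hp ⊢
      have := congrArg List.length hp
      simp at this ⊢
      omega
    · intro pr hpr
      have : s(pr.1, pr.2) ∈ circuitEdgeList l := List.mem_map.2 ⟨pr, hpr, rfl⟩
      rw [hcel] at this
      exact G.mem_edgeSet.1 (hadj _ this)
    · ext e; simp [hcel]

lemma edges_not_in_of_dropLast (S : V → Prop) (F₁ : List (Sym2 V))
    (hSF : ∀ a b : V, ¬ S a → s(a, b) ∉ F₁) :
    ∀ (q : List V), (∀ w ∈ q.dropLast, ¬ S w) → ∀ e ∈ pathEdges q, e ∉ F₁ := by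
  intro q
  match q with
  | [] => intro _ e he; simp at he
  | [a] => intro _ e he; simp at he
  | a :: b :: t =>
    intro h e he
    rcases List.mem_cons.1 he with rfl | he
    · exact hSF a b (h a (by simp)) 
    · refine edges_not_in_of_dropLast S F₁ hSF (b :: t) ?_ e he
      intro w hw
      exact h w (by simpa using Or.inr hw)

lemma extract (S : V → Prop) (F₁ : List (Sym2 V))
    (hSF : ∀ a b : V, ¬ S a → s(a, b) ∉ F₁) :
    ∀ (p : List V) (x y : V), p.head? = some x → p.getLast? = some y → S x → S y →
    (pathEdges p).Nodup → (∃ f ∈ pathEdges p, f ∉ F₁) →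
    ∃ (Q : List V) (x' y' : V), Q.head? = some x' ∧ Q.getLast? = some y' ∧ S x' ∧ S y' ∧
      pathEdges Q ≠ [] ∧ (pathEdges Q).Nodup ∧ (∀ e ∈ pathEdges Q, e ∈ pathEdges p) ∧
      (∀ e ∈ pathEdges Q, e ∉ F₁) := by
  intro p
  match p with
  | [] => intro x y hx; simp at hx
  | [a] => intro x y _ _ _ _ _ hf; simp at hf
  | a :: b :: t =>
    intro x y hx hy hxS hyS hnd hf
    have hxa : x = a := by simpa using hx.symm
    subst hxa
    by_cases hmid : ∃ u w z, b :: t = u ++ w :: z ∧ S w ∧ z ≠ []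
    · obtain ⟨u, w, z, heq, hwS, hz⟩ := hmid
      have hp : x :: b :: t = (x :: u) ++ w :: z := by simp [heq]
      have hsplit : pathEdges (x :: b :: t) =
          pathEdges ((x :: u) ++ [w]) ++ pathEdges (w :: z) := by
        rw [hp, pathEdges_split]
      have hnd1 : (pathEdges ((x :: u) ++ [w])).Nodup := by
        rw [hsplit] at hnd; exact hnd.of_append_left
      have hnd2 : (pathEdges (w :: z)).Nodup := by
        rw [hsplit] at hnd; exact hnd.of_append_right
      obtain ⟨f, hfmem, hfF⟩ := hf
      rw [hsplit] at hfmem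
      rcases List.mem_append.1 hfmem with hf1 | hf2
      · obtain ⟨Q, x', y', h1, h2, h3, h4, h5, h6, h7, h8⟩ :=
          extract S F₁ hSF ((x :: u) ++ [w]) x w (by simp) (by rw [List.getLast?_append]; rfl) hxS hwS hnd1 ⟨f, hf1, hfF⟩
        exact ⟨Q, x', y', h1, h2, h3, h4, h5, h6,
          fun e he => by rw [hsplit]; exact List.mem_append.2 (Or.inl (h7 e he)), h8⟩
      · have hy2 : (w :: z).getLast? = some y := by
          rw [hp] at hy
          rw [List.getLast?_append] at hy
          rcases z with _ | ⟨c, z'⟩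
          · exact absurd rfl hz
          · simpa using hy
        obtain ⟨Q, x', y', h1, h2, h3, h4, h5, h6, h7, h8⟩ :=
          extract S F₁ hSF (w :: z) w y (by simp) hy2 hwS hyS hnd2 ⟨f, hf2, hfF⟩
        exact ⟨Q, x', y', h1, h2, h3, h4, h5, h6,
          fun e he => by rw [hsplit]; exact List.mem_append.2 (Or.inr (h7 e he)), h8⟩
    · push_neg at hmid
      have hint : ∀ w ∈ (b :: t).dropLast, ¬ S w := by
        intro w hw hSw
        obtain ⟨u, z', hdrop⟩ := List.append_of_mem hw
        have hlast := List.dropLast_append_getLast (l := b :: t) (by simp)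
        rw [hdrop] at hlast
        have hzz : b :: t = u ++ w :: (z' ++ [(b :: t).getLast (by simp)]) := by
          conv_lhs => rw [← hlast]
          simp
        exact (by simp : (z' ++ [(b :: t).getLast (by simp)]) ≠ []) (hmid u w _ hzz hSw)
      rcases t with _ | ⟨c, t'⟩
      · -- p = [x, b]
        obtain ⟨f, hfmem, hfF⟩ := hf
        have hfe : f = s(x, b) := by simpa using hfmem
        subst hfe
        have hyb : y = b := by simpa using hy.symm
        refine ⟨[x, b], x, b, rfl, rfl, hxS, hyb ▸ hyS, by simp, hnd,
          fun e he => he, ?_⟩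
        intro e he
        have : e = s(x, b) := by simpa using he
        subst this
        exact hfF
      · refine ⟨x :: b :: c :: t', x, y, rfl, hy, hxS, hyS, by simp, hnd,
          fun e he => he, ?_⟩
        intro e he
        rcases List.mem_cons.1 he with rfl | he
        · have hb : ¬ S b := hint b (by simp)
          show s(x, b) ∉ F₁
          rw [Sym2.eq_swap]
          exact hSF b x hb
        · exact edges_not_in_of_dropLast S F₁ hSF (b :: c :: t') hint e he
termination_by p => p.length
decreasing_by
  all_goals
    have hL := congrArg List.length heq
    have hz' : 0 < z.length := List.length_pos_iff.2 hz
    simp [List.length_append] at hL ⊢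
    omega

lemma rotate_to_head {l : List V} {v : V} (hv : v ∈ l) :
    ∃ (n : ℕ) (t : List V), l.rotate n = v :: t := by
  classical
  set n := l.idxOf v with hn
  have hlt : n < l.length := List.idxOf_lt_length_iff.2 hv
  refine ⟨n, l.drop (n + 1) ++ l.take n, ?_⟩
  rw [List.rotate_eq_drop_append_take hlt.le]
  rw [List.drop_eq_getElem_cons hlt]
  rw [List.getElem_idxOf hlt]
  simp

lemma mem_of_mem_circuitEdgeList {l : List V} {e : Sym2 V} {w : V}
    (he : e ∈ circuitEdgeList l) (hw : w ∈ e) : w ∈ l := by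
  match l with
  | [] => simp [circuitEdgeList] at he
  | a :: t =>
    rw [circuitEdgeList_cons] at he
    have := mem_of_mem_pathEdges he hw
    simp at this ⊢
    tauto

lemma aux (G : SimpleGraph V) (M : ℝ) (hM : 0 < M)
    (hnoeven : ∀ k : ℕ, ∀ E : Set (Sym2 V), Even k → (k : ℝ) ≤ 2 * M → ¬ IsCircuit G k E)
    (k₁ k₂ : ℕ) (E₁ E₂ : Set (Sym2 V))
    (h₁ : IsCycle G k₁ E₁) (h₂ : IsCycle G k₂ E₂)
    (hodd₁ : Odd k₁)
    (hk₁ : (k₁ : ℝ) ≤ M) (hk₂ : (k₂ : ℝ) ≤ M)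
    (hex : ∃ e, e ∈ E₂ ∧ e ∉ E₁)
    (v : V) (hv₁ : ∃ e ∈ E₁, v ∈ e) (hv₂ : ∃ e ∈ E₂, v ∈ e) : False := by
  obtain ⟨l₁, hl₁len, hl₁ne, _hl₁nd, hl₁adj, hl₁end, hE₁⟩ := h₁
  obtain ⟨l₂, hl₂len, hl₂ne, _hl₂nd, hl₂adj, hl₂end, hE₂⟩ := h₂
  set F₁ := circuitEdgeList l₁ with hF₁
  have hF₁G : ∀ e ∈ F₁, e ∈ G.edgeSet := edge_mem_edgeSet hl₁adj
  have hF₂G : ∀ e ∈ circuitEdgeList l₂, e ∈ G.edgeSet := edge_mem_edgeSet hl₂adj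
  have hSF : ∀ a b : V, ¬ (a ∈ l₁) → s(a, b) ∉ F₁ := by
    intro a b ha h
    exact ha (mem_of_mem_circuitEdgeList h (by simp))
  -- v is on both cycles
  have hvl₁ : v ∈ l₁ := by
    obtain ⟨e, he, hve⟩ := hv₁
    rw [hE₁] at he
    exact mem_of_mem_circuitEdgeList he hve
  have hvl₂ : v ∈ l₂ := by
    obtain ⟨e, he, hve⟩ := hv₂
    rw [hE₂] at he
    exact mem_of_mem_circuitEdgeList he hve
  -- rotate l₂ to start at v
  obtain ⟨n₂, t₂, hrot₂⟩ := rotate_to_head hvl₂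
  have hperm₂ : List.Perm (circuitEdgeList (v :: t₂)) (circuitEdgeList l₂) := by
    rw [← hrot₂, circuitEdgeList_rotate]
    exact List.rotate_perm _ _
  set p : List V := (v :: t₂) ++ [v] with hp
  have hpE : pathEdges p = circuitEdgeList (v :: t₂) := (circuitEdgeList_cons v t₂).symm
  have hpnd : (pathEdges p).Nodup := by rw [hpE]; exact hperm₂.nodup_iff.2 hl₂end
  have hplen : (pathEdges p).length = k₂ := by
    rw [hpE, length_circuitEdgeList]
    have := hrot₂ ▸ (l₂.length_rotate n₂)
    simpa [hl₂len] using this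
  have hpf : ∃ f ∈ pathEdges p, f ∉ F₁ := by
    obtain ⟨e, he₂, he₁⟩ := hex
    rw [hE₂] at he₂
    refine ⟨e, ?_, by rw [hE₁] at he₁; exact he₁⟩
    rw [hpE]
    exact hperm₂.mem_iff.2 he₂
  have hpG : ∀ e ∈ pathEdges p, e ∈ G.edgeSet := by
    intro e he
    rw [hpE] at he
    exact hF₂G e (hperm₂.mem_iff.1 he)
  obtain ⟨Q, x, y, hQx, hQy, hxl₁, hyl₁, hQne, hQnd, hQsub, hQF₁⟩ :=
    extract (fun w => w ∈ l₁) F₁ hSF p v v rfl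
      (by rw [show p = (v :: t₂) ++ [v] from rfl, List.getLast?_append]; rfl) hvl₁ hvl₁ hpnd hpf
  set b := (pathEdges Q).length with hb
  have hbk₂ : b ≤ k₂ := by
    rw [← hplen]
    exact (hQnd.subperm hQsub).length_le
  have hb1 : 1 ≤ b := by
    rw [hb]
    exact List.length_pos_iff.2 hQne
  have hQG : ∀ e ∈ pathEdges Q, e ∈ G.edgeSet := fun e he => hpG e (hQsub e he)
  obtain ⟨qt, rfl⟩ : ∃ qt, Q = x :: qt := by
    cases Q with
    | nil => simp at hQx
    | cons q0 qt =>
      have hq : q0 = x := by simpa using hQx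
      exact ⟨qt, by rw [hq]⟩
  have hblen : b = qt.length := by
    rw [hb, length_pathEdges]; simp
  -- rotate l₁ to start at x
  obtain ⟨n₁, t₁, hrot₁⟩ := rotate_to_head hxl₁
  have hperm₁ : List.Perm (circuitEdgeList (x :: t₁)) F₁ := by
    rw [← hrot₁, circuitEdgeList_rotate]
    exact List.rotate_perm _ _
  set F₁' := circuitEdgeList (x :: t₁) with hF₁'
  have hF₁'nd : F₁'.Nodup := hperm₁.nodup_iff.2 hl₁end
  have hF₁'len : F₁'.length = k₁ := by
    rw [hF₁', length_circuitEdgeList]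
    have := hrot₁ ▸ (l₁.length_rotate n₁)
    simpa [hl₁len] using this
  have hF₁'G : ∀ e ∈ F₁', e ∈ G.edgeSet := fun e he => hF₁G e (hperm₁.mem_iff.1 he)
  have hQF₁' : ∀ e ∈ pathEdges (x :: qt), e ∉ F₁' := by
    intro e he hmem
    exact hQF₁ e he (hperm₁.mem_iff.1 hmem)
  have hF₁'path : F₁' = pathEdges ((x :: t₁) ++ [x]) := circuitEdgeList_cons x t₁
  have hyl₁' : y ∈ x :: t₁ := by
    rw [← hrot₁]
    exact (List.mem_rotate).2 hyl₁
  have hk₁k₂ : (k₁ : ℝ) + (k₂ : ℝ) ≤ 2 * M := by linarith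
  by_cases hxy : x = y
  · subst hxy
    rcases Nat.even_or_odd b with hbe | hbo
    · -- Q itself is an even circuit
      have hc := buildCircuit G (x :: qt) (by simp; omega) (by rw [hQx, hQy])
        hQG hQnd
      have hlen : (x :: qt).length - 1 = b := by simp [hblen]
      rw [hlen] at hc
      refine hnoeven b _ hbe ?_ hc
      have : (b : ℝ) ≤ (k₂ : ℝ) := Nat.cast_le.2 hbk₂
      linarith
    · -- combine full cycle C₁ with closed walk Q
      set W : List V := (x :: t₁) ++ (x :: qt) with hW
      have hWsplit : pathEdges W = F₁' ++ pathEdges (x :: qt) := by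
        rw [hW, pathEdges_split, ← hF₁'path]
      have hWnd : (pathEdges W).Nodup := by
        rw [hWsplit]
        exact hF₁'nd.append hQnd (fun e he₁ he₂ => hQF₁' e he₂ he₁)
      have hWG : ∀ e ∈ pathEdges W, e ∈ G.edgeSet := by
        intro e he
        rw [hWsplit] at he
        rcases List.mem_append.1 he with h | h
        · exact hF₁'G e h
        · exact hQG e h
      have hWlen : (pathEdges W).length = k₁ + b := by
        rw [hWsplit]; simp [hF₁'len, hb]
      have hWlen2 : W.length - 1 = k₁ + b := by
        rw [← length_pathEdges, hWlen]
      have hWhead : W.head? = some x := rfl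
      have hWlast : W.getLast? = some x := by
        rw [hW, List.getLast?_append]
        rw [hQy]; rfl
      have hc := buildCircuit G W (by
          have := length_pathEdges W
          rw [hWlen] at this
          omega) (by rw [hWhead, hWlast]) hWG hWnd
      rw [hWlen2] at hc
      refine hnoeven (k₁ + b) _ ?_ ?_ hc
      · rcases hodd₁ with ⟨m, hm⟩
        rcases hbo with ⟨m', hm'⟩
        exact ⟨m + m' + 1, by omega⟩
      · have h1 : ((k₁ + b : ℕ) : ℝ) = (k₁ : ℝ) + (b : ℝ) := by push_cast; ring
        have h2 : (b : ℝ) ≤ (k₂ : ℝ) := Nat.cast_le.2 hbk₂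
        rw [h1]; linarith
  · -- x ≠ y : split C₁ into two arcs at x and y
    have hyt₁ : y ∈ t₁ := by
      rcases List.mem_cons.1 hyl₁' with h | h
      · exact absurd h.symm hxy
      · exact h
    obtain ⟨u, z, rfl⟩ := List.append_of_mem hyt₁
    set A₁ := pathEdges ((x :: u) ++ [y]) with hA₁
    set A₂ := pathEdges (y :: (z ++ [x])) with hA₂
    have hsplit : F₁' = A₁ ++ A₂ := by
      rw [hF₁'path, hA₁, hA₂]
      rw [show (x :: (u ++ y :: z)) ++ [x] = (x :: u) ++ y :: (z ++ [x]) by simp]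
      rw [pathEdges_split]
    have hA₁len : A₁.length = u.length + 1 := by
      rw [hA₁, length_pathEdges]; simp
    have hA₂len : A₂.length = z.length + 1 := by
      rw [hA₂, length_pathEdges]; simp
    have hk₁eq : A₁.length + A₂.length = k₁ := by
      rw [← hF₁'len, hsplit]; simp
    have hA₁nd : A₁.Nodup := by rw [hsplit] at hF₁'nd; exact hF₁'nd.of_append_left
    have hA₂nd : A₂.Nodup := by rw [hsplit] at hF₁'nd; exact hF₁'nd.of_append_right
    have hA₁G : ∀ e ∈ A₁, e ∈ G.edgeSet := by
      intro e he; exact hF₁'G e (by rw [hsplit]; exact List.mem_append.2 (Or.inl he))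
    have hA₂G : ∀ e ∈ A₂, e ∈ G.edgeSet := by
      intro e he; exact hF₁'G e (by rw [hsplit]; exact List.mem_append.2 (Or.inr he))
    have hQA₁ : ∀ e ∈ pathEdges (x :: qt), e ∉ A₁ := by
      intro e he hmem
      exact hQF₁' e he (by rw [hsplit]; exact List.mem_append.2 (Or.inl hmem))
    have hQA₂ : ∀ e ∈ pathEdges (x :: qt), e ∉ A₂ := by
      intro e he hmem
      exact hQF₁' e he (by rw [hsplit]; exact List.mem_append.2 (Or.inr hmem))
    have hoddk₁ : ¬ (Even (A₁.length + A₂.length)) := by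
      rw [hk₁eq]; exact (Nat.not_even_iff_odd).2 hodd₁
    rcases Nat.even_or_odd (A₁.length + b) with hpar | hpar
    · -- use arc A₁ (x to y) and reversed Q (y to x)
      obtain ⟨a, r, hr0⟩ := List.exists_cons_of_ne_nil (show (x :: qt).reverse ≠ [] by simp)
      have hr : (x :: qt).reverse = y :: r := by
        have h2 : (x :: qt).reverse.head? = some y := by
          rw [← List.getLast?_eq_head?_reverse, hQy]
        rw [hr0] at h2
        rw [hr0, show a = y by simpa using h2]
      set W : List V := (x :: u) ++ (x :: qt).reverse with hW
      have hWsplit : pathEdges W = A₁ ++ (pathEdges (x :: qt)).reverse := by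
        rw [hW, hr, pathEdges_split, hA₁, ← hr, pathEdges_reverse]
      have hWnd : (pathEdges W).Nodup := by
        rw [hWsplit]
        refine hA₁nd.append (by simpa using hQnd) ?_
        intro e he₁ he₂
        exact hQA₁ e (by simpa using he₂) he₁
      have hWG : ∀ e ∈ pathEdges W, e ∈ G.edgeSet := by
        intro e he
        rw [hWsplit] at he
        rcases List.mem_append.1 he with h | h
        · exact hA₁G e h
        · exact hQG e (by simpa using h)
      have hWlen : (pathEdges W).length = A₁.length + b := by
        rw [hWsplit]; simp [hb]
      have hWlast : W.getLast? = some x := by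
        rw [hW, List.getLast?_append, List.getLast?_eq_head?_reverse]
        simp
      have hc := buildCircuit G W (by
          have := length_pathEdges W
          rw [hWlen] at this
          omega) (by rw [hWlast]; rfl) hWG hWnd
      have hWlen2 : W.length - 1 = A₁.length + b := by
        rw [← length_pathEdges, hWlen]
      rw [hWlen2] at hc
      refine hnoeven _ _ hpar ?_ hc
      have h2 : (b : ℝ) ≤ (k₂ : ℝ) := Nat.cast_le.2 hbk₂
      have h3 : (A₁.length : ℝ) ≤ (k₁ : ℝ) := Nat.cast_le.2 (by omega)
      push_cast
      linarith
    · -- use arc A₂ (y to x) and Q (x to y)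
      have hpar2 : Even (A₂.length + b) := by
        rcases Nat.even_or_odd (A₂.length + b) with h | h
        · exact h
        · exfalso
          apply hoddk₁
          rcases hpar with ⟨m, hm⟩
          rcases h with ⟨m', hm'⟩
          exact ⟨m + m' + 1 - b, by omega⟩
      set W : List V := (y :: z) ++ (x :: qt) with hW
      have hWsplit : pathEdges W = A₂ ++ pathEdges (x :: qt) := by
        rw [hW, pathEdges_split, hA₂]
        rw [show (y :: z) ++ [x] = y :: (z ++ [x]) by simp]
      have hWnd : (pathEdges W).Nodup := by
        rw [hWsplit]
        exact hA₂nd.append hQnd (fun e he₁ he₂ => hQA₂ e he₂ he₁)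
      have hWG : ∀ e ∈ pathEdges W, e ∈ G.edgeSet := by
        intro e he
        rw [hWsplit] at he
        rcases List.mem_append.1 he with h | h
        · exact hA₂G e h
        · exact hQG e h
      have hWlen : (pathEdges W).length = A₂.length + b := by
        rw [hWsplit]; simp [hb]
      have hWlast : W.getLast? = some y := by
        rw [hW, List.getLast?_append, hQy]; rfl
      have hc := buildCircuit G W (by
          have := length_pathEdges W
          rw [hWlen] at this
          omega) (by rw [hWlast]; rfl) hWG hWnd
      have hWlen2 : W.length - 1 = A₂.length + b := by
        rw [← length_pathEdges, hWlen]
      rw [hWlen2] at hc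
      refine hnoeven _ _ hpar2 ?_ hc
      have h2 : (b : ℝ) ≤ (k₂ : ℝ) := Nat.cast_le.2 hbk₂
      have h3 : (A₂.length : ℝ) ≤ (k₁ : ℝ) := Nat.cast_le.2 (by omega)
      push_cast
      linarith

end Helpers

/-- In a graph with no even circuits of length at most `2M`, any two distinct odd cycles
of length at most `M` are vertex-disjoint. -/
theorem stmt11 {V : Type*} (G : SimpleGraph V) (M : ℝ) (hM : 0 < M)
    (hnoeven : ∀ k : ℕ, ∀ E : Set (Sym2 V), Even k → (k : ℝ) ≤ 2 * M →
      ¬ IsCircuit G k E)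
    (k₁ k₂ : ℕ) (E₁ E₂ : Set (Sym2 V))
    (h₁ : IsCycle G k₁ E₁) (h₂ : IsCycle G k₂ E₂)
    (hodd₁ : Odd k₁) (hodd₂ : Odd k₂)
    (hk₁ : (k₁ : ℝ) ≤ M) (hk₂ : (k₂ : ℝ) ≤ M)
    (hne : E₁ ≠ E₂) :
    ∀ v : V, ¬ ((∃ e ∈ E₁, v ∈ e) ∧ (∃ e ∈ E₂, v ∈ e)) := by
  rintro v ⟨hv₁, hv₂⟩
  have hex : ∃ e, (e ∈ E₂ ∧ e ∉ E₁) ∨ (e ∈ E₁ ∧ e ∉ E₂) := by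
    by_contra hc
    push_neg at hc
    apply hne
    ext e
    have := hc e
    tauto
  rcases hex with ⟨e, h | h⟩
  · exact aux G M hM hnoeven k₁ k₂ E₁ E₂ h₁ h₂ hodd₁ hk₁ hk₂ ⟨e, h⟩ v hv₁ hv₂
  · exact aux G M hM hnoeven k₂ k₁ E₂ E₁ h₂ h₁ hodd₂ hk₂ hk₁ ⟨e, h⟩ v hv₂ hv₁
end

section
/- For every ε > 0 there exists a constant C > 0 with the following property. Let N ∈ ℕ and let A ⊆ [N] have distinct subset products, such that the map a ↦ (v_p(a))_{p prime, N^{1/3} < p ≤ N} is injective on A and every a ∈ A is divisible by some prime in (N^{1/3}, N], and suppose the prime factorization graph G(A) contains no circuit of even length at most 2·N^{1/12}. Let P_□ = {p prime : N^{1/3} < p ≤ N^{1/2} and p² ∣ a for some a ∈ A}. If C_1, …, C_n are the edge sets of pairwise edge-disjoint cycles in G(A), each of odd length at most N^{1/12} and each containing a vertex belonging to P_□, then n ≤ C·N^{1/3+ε}. -/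
/-- `PLM N p` : `p` is a prime in `(N^{1/3}, N]` (a "large or medium" prime). -/
def PLM (N : ℕ) (p : ℕ) : Prop :=
  p.Prime ∧ (N : ℝ) ^ ((1 : ℝ) / 3) < (p : ℝ) ∧ p ≤ N

/-- The *prime factorization graph* of `A ⊆ [N]`: the vertices are the natural numbers
(only `1` and the primes in `(N^{1/3}, N]` can fail to be isolated); `1` is joined to a
prime `p ∈ (N^{1/3}, N]` if some `a ∈ A` has `v_p(a) = 1` and `v_q(a) = 0` for every
other prime `q ∈ (N^{1/3}, N]`; two distinct primes `p, q ∈ (N^{1/3}, N]` are joined if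
some `a ∈ A` is divisible by both. -/
def pfGraph (N : ℕ) (A : Finset ℕ) : SimpleGraph ℕ where
  Adj x y := x ≠ y ∧
    ((x = 1 ∧ PLM N y ∧ ∃ a ∈ A, padicValNat y a = 1 ∧
        ∀ q, PLM N q → q ≠ y → padicValNat q a = 0) ∨
     (y = 1 ∧ PLM N x ∧ ∃ a ∈ A, padicValNat x a = 1 ∧
        ∀ q, PLM N q → q ≠ x → padicValNat q a = 0) ∨
     (PLM N x ∧ PLM N y ∧ ∃ a ∈ A, x ∣ a ∧ y ∣ a))
  symm := by
    constructor
    intro x y ⟨hne, h⟩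
    refine ⟨hne.symm, ?_⟩
    rcases h with h | h | ⟨hx, hy, a, ha, hxa, hya⟩
    · exact Or.inr (Or.inl h)
    · exact Or.inl h
    · exact Or.inr (Or.inr ⟨hy, hx, a, ha, hya, hxa⟩)
  loopless := ⟨fun x h => h.1 rfl⟩

/-- A set of positive integers has *distinct subset products* if any two distinct
finite subsets have distinct products (the empty product is `1`). -/
def DistinctSubsetProds (A : Set ℕ) : Prop :=
  ∀ B C : Finset ℕ, ↑B ⊆ A → ↑C ⊆ A → ∏ b ∈ B, b = ∏ c ∈ C, c → B = C

/-- `Psq N A` is the set of primes `p ∈ (N^{1/3}, N^{1/2}]` such that `p²` divides some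
element of `A`. -/
def Psq (N : ℕ) (A : Finset ℕ) : Set ℕ :=
  {p : ℕ | p.Prime ∧ (N : ℝ) ^ ((1 : ℝ) / 3) < (p : ℝ) ∧ (p : ℝ) ≤ (N : ℝ) ^ ((1 : ℝ) / 2) ∧
    ∃ a ∈ A, p ^ 2 ∣ a}
section AuxLemmas

open Finset

lemma cube_rpow (N : ℕ) : ((N:ℝ) ^ ((1:ℝ)/3)) * ((N:ℝ) ^ ((1:ℝ)/3)) * ((N:ℝ) ^ ((1:ℝ)/3)) = (N:ℝ) := by
  rw [← Real.rpow_add' (Nat.cast_nonneg N) (by norm_num), ← Real.rpow_add' (Nat.cast_nonneg N) (by norm_num)]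
  norm_num

lemma triple_gt {N u v q : ℕ} (hu : (N:ℝ) ^ ((1:ℝ)/3) < u) (hv : (N:ℝ) ^ ((1:ℝ)/3) < v)
    (hq : (N:ℝ) ^ ((1:ℝ)/3) < q) : N < u * v * q := by
  have hx : (0:ℝ) ≤ (N:ℝ) ^ ((1:ℝ)/3) := Real.rpow_nonneg (Nat.cast_nonneg N) _
  have h1 : (N:ℝ) < (u:ℝ) * v * q := by
    calc (N:ℝ) = ((N:ℝ) ^ ((1:ℝ)/3)) * ((N:ℝ) ^ ((1:ℝ)/3)) * ((N:ℝ) ^ ((1:ℝ)/3)) := (cube_rpow N).symm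
    _ < (u:ℝ) * v * q := by
        apply mul_lt_mul'' (mul_lt_mul'' hu hv hx hx) hq (by positivity) hx
  exact_mod_cast h1

end AuxLemmas
section AuxLemmas2

open Finset

lemma adj_witness {N : ℕ} {A : Finset ℕ} (hA : ↑A ⊆ Set.Icc 1 N) {u v : ℕ}
    (h : (pfGraph N A).Adj u v) :
    ∃ a, a ∈ A ∧ ∀ q : ℕ, PLM N q →
      a.factorization q = (if q = u then 1 else 0) + (if q = v then 1 else 0) := by
  simp only [pfGraph] at h
  obtain ⟨hne, hcase⟩ := h
  have hbase : ∀ {a : ℕ}, a ∈ A → 1 ≤ a ∧ a ≤ N := by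
    intro a ha; exact Set.mem_Icc.mp (hA ha)
  rcases hcase with ⟨hu1, hPv, a, haA, hva, hother⟩ | ⟨hv1, hPu, a, haA, hua, hother⟩ |
      ⟨hPu, hPv, a, haA, hua, hva⟩
  · refine ⟨a, haA, fun q hq => ?_⟩
    have hq1 : q ≠ u := by rw [hu1]; exact hq.1.ne_one
    rw [if_neg hq1]
    by_cases hqv : q = v
    · subst hqv; rw [if_pos rfl, Nat.factorization_def _ hq.1, hva]
    · rw [if_neg hqv, Nat.factorization_def _ hq.1, hother q hq hqv]
  · refine ⟨a, haA, fun q hq => ?_⟩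
    have hq1 : q ≠ v := by rw [hv1]; exact hq.1.ne_one
    rw [if_neg hq1, add_zero]
    by_cases hqu : q = u
    · subst hqu; rw [if_pos rfl, Nat.factorization_def _ hq.1, hua]
    · rw [if_neg hqu, Nat.factorization_def _ hq.1, hother q hq hqu]
  · have ha1 := (hbase haA).1
    have haN := (hbase haA).2
    have ha0 : a ≠ 0 := by omega
    have hcuv : Nat.Coprime u v := (Nat.coprime_primes hPu.1 hPv.1).mpr hne
    have hfu : a.factorization u = 1 := by
      have h1 : 1 ≤ a.factorization u := (hPu.1.dvd_iff_one_le_factorization ha0).mp hua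
      by_contra hcon
      have h2 : 2 ≤ a.factorization u := by omega
      have hdvd : u ^ 2 * v ∣ a := by
        refine (Nat.Coprime.mul_dvd_of_dvd_of_dvd ?_ ?_ hva)
        · exact Nat.Coprime.pow_left _ hcuv
        · exact (hPu.1.pow_dvd_iff_le_factorization ha0).mpr h2
      have hle : u ^ 2 * v ≤ a := Nat.le_of_dvd (by omega) hdvd
      have hgt : N < u * u * v := triple_gt hPu.2.1 hPu.2.1 hPv.2.1
      have : u ^ 2 * v = u * u * v := by ring
      omega
    have hfv : a.factorization v = 1 := by
      have h1 : 1 ≤ a.factorization v := (hPv.1.dvd_iff_one_le_factorization ha0).mp hva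
      by_contra hcon
      have h2 : 2 ≤ a.factorization v := by omega
      have hdvd : v ^ 2 * u ∣ a := by
        refine (Nat.Coprime.mul_dvd_of_dvd_of_dvd ?_ ?_ hua)
        · exact Nat.Coprime.pow_left _ hcuv.symm
        · exact (hPv.1.pow_dvd_iff_le_factorization ha0).mpr h2
      have hle : v ^ 2 * u ≤ a := Nat.le_of_dvd (by omega) hdvd
      have hgt : N < v * v * u := triple_gt hPv.2.1 hPv.2.1 hPu.2.1
      have : v ^ 2 * u = v * v * u := by ring
      omega
    refine ⟨a, haA, fun q hq => ?_⟩
    by_cases hqu : q = u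
    · subst hqu; rw [if_pos rfl, if_neg hne, hfu]
    · by_cases hqv : q = v
      · subst hqv; rw [if_neg hqu, if_pos rfl, hfv]
      · rw [if_neg hqu, if_neg hqv]
        by_contra hcon
        have hq0 : 1 ≤ a.factorization q := by omega
        have hqa : q ∣ a := (hq.1.dvd_iff_one_le_factorization ha0).mpr hq0
        have hdvd : u * v * q ∣ a := by
          refine Nat.Coprime.mul_dvd_of_dvd_of_dvd ?_
            (Nat.Coprime.mul_dvd_of_dvd_of_dvd hcuv hua hva) hqa
          exact Nat.Coprime.mul ((Nat.coprime_primes hPu.1 hq.1).mpr (Ne.symm hqu))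
            ((Nat.coprime_primes hPv.1 hq.1).mpr (Ne.symm hqv))
        have hle : u * v * q ≤ a := Nat.le_of_dvd (by omega) hdvd
        have hgt : N < u * v * q := triple_gt hPu.2.1 hPv.2.1 hq.2.1
        omega

lemma psq_witness {N : ℕ} {A : Finset ℕ} (hA : ↑A ⊆ Set.Icc 1 N) {p : ℕ} (hp : p ∈ Psq N A) :
    PLM N p ∧ ∃ a, a ∈ A ∧ ∀ q : ℕ, PLM N q →
      a.factorization q = if q = p then 2 else 0 := by
  obtain ⟨hprime, hlb, hub, a, haA, hdvd⟩ := hp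
  have hbase : 1 ≤ a ∧ a ≤ N := Set.mem_Icc.mp (hA haA)
  have ha0 : a ≠ 0 := by omega
  have hp2 : p ^ 2 ≤ a := Nat.le_of_dvd (by omega) hdvd
  have hpN : p ≤ N := by
    have : p ≤ p ^ 2 := Nat.le_self_pow (by norm_num) p
    omega
  have hPLM : PLM N p := ⟨hprime, hlb, hpN⟩
  refine ⟨hPLM, a, haA, fun q hq => ?_⟩
  have hf2 : a.factorization p = 2 := by
    have h1 : 2 ≤ a.factorization p := (hprime.pow_dvd_iff_le_factorization ha0).mp hdvd
    by_contra hcon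
    have h3 : 3 ≤ a.factorization p := by omega
    have hd3 : p ^ 3 ∣ a := (hprime.pow_dvd_iff_le_factorization ha0).mpr h3
    have hle : p ^ 3 ≤ a := Nat.le_of_dvd (by omega) hd3
    have hgt : N < p * p * p := triple_gt hlb hlb hlb
    have : p ^ 3 = p * p * p := by ring
    omega
  by_cases hqp : q = p
  · subst hqp; rw [if_pos rfl]; exact hf2
  · rw [if_neg hqp]
    by_contra hcon
    have hq0 : 1 ≤ a.factorization q := by omega
    have hqa : q ∣ a := (hq.1.dvd_iff_one_le_factorization ha0).mpr hq0
    have hdvd2 : p ^ 2 * q ∣ a := by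
      refine Nat.Coprime.mul_dvd_of_dvd_of_dvd ?_ hdvd hqa
      exact Nat.Coprime.pow_left _ ((Nat.coprime_primes hprime hq.1).mpr (Ne.symm hqp))
    have hle : p ^ 2 * q ≤ a := Nat.le_of_dvd (by omega) hdvd2
    have hgt : N < p * p * q := triple_gt hlb hlb hq.2.1
    have : p ^ 2 * q = p * p * q := by ring
    omega

end AuxLemmas2
section AuxLemmas3

open Finset

lemma alt_sum_even {k : ℕ} (hk : Odd k) (g : ℕ → ℕ) (hg : g k = g 0) :
    ∑ m ∈ (Finset.range k).filter (fun m => m % 2 = 0), (g m + g (m+1))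
      = (∑ m ∈ Finset.range k, g m) + g 0 := by
  have hk1 : 1 ≤ k := hk.pos
  have hk2 : k % 2 = 1 := Nat.odd_iff.mp hk
  rw [Finset.sum_add_distrib]
  have h2 : ∑ m ∈ (Finset.range k).filter (fun m => m % 2 = 0), g (m+1)
      = (∑ m ∈ (Finset.range k).filter (fun m => m % 2 = 1), g m) + g 0 := by
    have hmem : k - 1 ∈ (Finset.range k).filter (fun m => m % 2 = 0) := by
      simp only [Finset.mem_filter, Finset.mem_range]; omega
    rw [← Finset.sum_erase_add _ _ hmem]
    have hwrap : g (k - 1 + 1) = g 0 := by rw [show k - 1 + 1 = k by omega, hg]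
    rw [hwrap]
    congr 1
    refine Finset.sum_bij' (fun m _ => m + 1) (fun m _ => m - 1) ?_ ?_ ?_ ?_ ?_
    · intro m hm
      simp only [Finset.mem_erase, Finset.mem_filter, Finset.mem_range] at hm ⊢
      omega
    · intro m hm
      simp only [Finset.mem_erase, Finset.mem_filter, Finset.mem_range] at hm ⊢
      omega
    · intro m hm; show m + 1 - 1 = m; omega
    · intro m hm
      simp only [Finset.mem_filter, Finset.mem_range] at hm
      show m - 1 + 1 = m; omega
    · intro m hm; rfl
  rw [h2]
  have h3 := Finset.sum_filter_add_sum_filter_not (Finset.range k) (fun m => m % 2 = 0) g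
  have h4 : (Finset.range k).filter (fun m => ¬ m % 2 = 0)
      = (Finset.range k).filter (fun m => m % 2 = 1) := by
    apply Finset.filter_congr; intro m _; constructor <;> omega
  rw [h4] at h3
  rw [← h3, add_assoc]

end AuxLemmas3
section AuxLemmas4

open Finset

lemma alt_sum_odd {k : ℕ} (hk : Odd k) (g : ℕ → ℕ) :
    (∑ m ∈ (Finset.range k).filter (fun m => m % 2 = 1), (g m + g (m+1))) + g 0
      = ∑ m ∈ Finset.range k, g m := by
  have hk1 : 1 ≤ k := hk.pos
  have hk2 : k % 2 = 1 := Nat.odd_iff.mp hk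
  rw [Finset.sum_add_distrib]
  have h2 : ∑ m ∈ (Finset.range k).filter (fun m => m % 2 = 1), g (m+1)
      = ∑ m ∈ ((Finset.range k).filter (fun m => m % 2 = 0)).erase 0, g m := by
    refine Finset.sum_bij' (fun m _ => m + 1) (fun m _ => m - 1) ?_ ?_ ?_ ?_ ?_
    · intro m hm
      simp only [Finset.mem_filter, Finset.mem_range] at hm
      simp only [Finset.mem_erase, Finset.mem_filter, Finset.mem_range]
      omega
    · intro m hm
      simp only [Finset.mem_erase, Finset.mem_filter, Finset.mem_range] at hm
      simp only [Finset.mem_filter, Finset.mem_range]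
      omega
    · intro m hm; show m + 1 - 1 = m; omega
    · intro m hm
      simp only [Finset.mem_erase, Finset.mem_filter, Finset.mem_range] at hm
      show m - 1 + 1 = m; omega
    · intro m hm; rfl
  rw [h2]
  have hmem0 : 0 ∈ (Finset.range k).filter (fun m => m % 2 = 0) :=
    Finset.mem_filter.mpr ⟨Finset.mem_range.mpr hk1, by norm_num⟩
  have h5 := Finset.sum_erase_add ((Finset.range k).filter (fun m => m % 2 = 0)) g hmem0
  have h3 := Finset.sum_filter_add_sum_filter_not (Finset.range k) (fun m => m % 2 = 0) g
  have h4 : (Finset.range k).filter (fun m => ¬ m % 2 = 0)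
      = (Finset.range k).filter (fun m => m % 2 = 1) := by
    apply Finset.filter_congr; intro m _; constructor <;> omega
  rw [h4] at h3
  rw [add_assoc, h5, ← h3]
  exact add_comm _ _
lemma zip_rotate_self (l : List ℕ) (j : ℕ) :
    (l.rotate j).zip ((l.rotate j).rotate 1) = (l.zip (l.rotate 1)).rotate j := by
  apply List.ext_getElem
  · simp
  · intro m h1 h2
    have hL : 0 < l.length := by
      simp only [List.length_zip, List.length_rotate] at h1
      omega
    simp only [List.rotate_rotate] at h1 ⊢
    simp only [List.getElem_zip, List.getElem_rotate, List.length_zip, List.length_rotate,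
      min_self]
    refine Prod.ext ?_ ?_
    · rfl
    · have hi1 : (m + (j + 1)) % l.length < l.length := Nat.mod_lt _ hL
      have hi2 : ((m + j) % l.length + 1) % l.length < l.length := Nat.mod_lt _ hL
      show l[(m + (j + 1)) % l.length]'hi1 = l[((m + j) % l.length + 1) % l.length]'hi2
      congr 1
      rw [Nat.mod_add_mod, ← add_assoc]

end AuxLemmas4
section AuxLemmas5

lemma cel_rotate (l : List ℕ) (j : ℕ) :
    circuitEdgeList (l.rotate j) = (circuitEdgeList l).rotate j := by
  unfold circuitEdgeList
  rw [zip_rotate_self, List.map_rotate]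

lemma zip_append_closed {x y : List ℕ} (hx : x ≠ []) (hy : y ≠ [])
    (hxy : x.head hx = y.head hy) :
    (x ++ y).zip ((x ++ y).rotate 1) = x.zip (x.rotate 1) ++ y.zip (y.rotate 1) := by
  obtain ⟨a, xs, rfl⟩ := List.exists_cons_of_ne_nil hx
  obtain ⟨b, ys, rfl⟩ := List.exists_cons_of_ne_nil hy
  simp only [List.head_cons] at hxy
  subst hxy
  have hr : ∀ (c : ℕ) (L : List ℕ), (c :: L).rotate 1 = L ++ [c] := by
    intro c L
    rw [show (1:ℕ) = 0 + 1 from rfl, List.rotate_cons_succ, List.rotate_zero]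
  have h1 : (a :: xs ++ a :: ys).rotate 1 = (xs ++ [a]) ++ (ys ++ [a]) := by
    rw [show (a :: xs ++ a :: ys) = a :: (xs ++ a :: ys) from rfl, hr]
    simp
  rw [h1, hr, hr]
  rw [show (a :: xs ++ a :: ys) = (a :: xs) ++ (a :: ys) from rfl]
  rw [List.zip_append (by simp)]

lemma cel_append {x y : List ℕ} (hx : x ≠ []) (hy : y ≠ [])
    (hxy : x.head hx = y.head hy) :
    circuitEdgeList (x ++ y) = circuitEdgeList x ++ circuitEdgeList y := by
  unfold circuitEdgeList
  rw [zip_append_closed hx hy hxy, List.map_append]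

lemma vq_le_N {x q N : ℕ} (hx1 : 1 ≤ x) (hxN : x ≤ N) : x.factorization q ≤ N := by
  by_cases hq : q.Prime
  · have hd : q ^ x.factorization q ∣ x := Nat.ordProj_dvd x q
    have hle : q ^ x.factorization q ≤ x := Nat.le_of_dvd (by omega) hd
    have h2 : x.factorization q < 2 ^ x.factorization q := Nat.lt_two_pow_self
    have h3 : 2 ^ x.factorization q ≤ q ^ x.factorization q :=
      Nat.pow_le_pow_left hq.two_le _
    omega
  · rw [Nat.factorization_eq_zero_of_not_prime _ hq]; omega

end AuxLemmas5
set_option maxHeartbeats 2000000 in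

/-- If the prime factorization graph has no even circuit of length at most `2·N^{1/12}`,
and `C_1, …, C_n` are edge sets of pairwise edge-disjoint odd cycles of length at most
`N^{1/12}`, each with a vertex from `P_□`, then `n ≤ C·N^{1/3+ε}`. -/
theorem stmt12 : ∀ ε : ℝ, 0 < ε → ∃ C : ℝ, 0 < C ∧
    ∀ N : ℕ, ∀ A : Finset ℕ, ↑A ⊆ Set.Icc 1 N → DistinctSubsetProds ↑A →
    (∀ a ∈ A, ∀ b ∈ A, (∀ p : ℕ, PLM N p → padicValNat p a = padicValNat p b) → a = b) →
    (∀ a ∈ A, ∃ p : ℕ, PLM N p ∧ p ∣ a) →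
    (∀ k : ℕ, ∀ E : Set (Sym2 ℕ), Even k → (k : ℝ) ≤ 2 * (N : ℝ) ^ ((1 : ℝ) / 12) →
      ¬ IsCircuit (pfGraph N A) k E) →
    ∀ n : ℕ, ∀ Cs : Fin n → Set (Sym2 ℕ), ∀ k : Fin n → ℕ,
    (∀ i, IsCycle (pfGraph N A) (k i) (Cs i)) →
    (∀ i, Odd (k i)) →
    (∀ i, (k i : ℝ) ≤ (N : ℝ) ^ ((1 : ℝ) / 12)) →
    (∀ i, ∃ p ∈ Psq N A, ∃ e ∈ Cs i, p ∈ e) →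
    (∀ i j, i ≠ j → Disjoint (Cs i) (Cs j)) →
    (n : ℝ) ≤ C * (N : ℝ) ^ ((1 : ℝ) / 3 + ε) := by
  classical
  intro ε hε
  have hlog2 : 0 < Real.log 2 := Real.log_pos (by norm_num)
  have hCpos : 0 < 8 / (ε * Real.log 2) + 1 := by
    have := mul_pos hε hlog2
    positivity
  refine ⟨8 / (ε * Real.log 2) + 1, hCpos, ?_⟩
  intro N A hA hDSP hvalinj hdivis hNoCirc n Cs ks hcyc hodd hkle hsqv hdisj
  rcases Nat.eq_zero_or_pos n with rfl | hn
  · rw [Nat.cast_zero]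
    exact mul_nonneg hCpos.le (Real.rpow_nonneg (Nat.cast_nonneg N) _)
  -- N ≥ 4
  have hN4 : 4 ≤ N := by
    obtain ⟨p0, hp0, -⟩ := hsqv ⟨0, hn⟩
    have h2p : (2:ℝ) ≤ p0 := by exact_mod_cast hp0.1.two_le
    have hup : (p0:ℝ) ≤ (N:ℝ) ^ ((1:ℝ)/2) := hp0.2.2.1
    have hsq2 : ((N:ℝ) ^ ((1:ℝ)/2)) * ((N:ℝ) ^ ((1:ℝ)/2)) = N := by
      rw [← Real.rpow_add' (Nat.cast_nonneg N) (by norm_num)]; norm_num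
    have h4 : (4:ℝ) ≤ N := by nlinarith
    exact_mod_cast h4
  have hAbd : ∀ a ∈ A, 1 ≤ a ∧ a ≤ N := fun a ha => Set.mem_Icc.mp (hA ha)
  have hkpos : ∀ i, 0 < ks i := fun i => (hodd i).pos
  -- extract cycle data
  choose l hlen hlne hlnodup hladj hlcelnd hlE using hcyc
  choose p hpPsq e heCs hpe using hsqv
  have hpl : ∀ i, p i ∈ l i := by
    intro i
    have hei : e i ∈ circuitEdgeList (l i) := by
      have h1 := heCs i
      rw [hlE i] at h1
      exact h1
    obtain ⟨pr, hpr, hpre⟩ := List.mem_map.mp hei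
    obtain ⟨u, v⟩ := pr
    have hz := List.of_mem_zip hpr
    have hp12 : p i = u ∨ p i = v := by
      have hpei := hpe i
      rw [← hpre] at hpei
      exact Sym2.mem_iff.mp hpei
    rcases hp12 with rfl | rfl
    · exact hz.1
    · exact List.mem_rotate.mp hz.2
  choose jdx hjlt hjval using fun i => List.mem_iff_getElem.mp (hpl i)
  set L : Fin n → List ℕ := fun i => (l i).rotate (jdx i) with hLdef
  have hLlen : ∀ i, (L i).length = ks i := by
    intro i; rw [hLdef]; simp only [List.length_rotate]; exact hlen i
  have hLne : ∀ i, L i ≠ [] := by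
    intro i hnil
    have h1 := hLlen i
    rw [hnil] at h1
    simp only [List.length_nil] at h1
    have := hkpos i
    omega
  have hLadj : ∀ i, ∀ pr ∈ (L i).zip ((L i).rotate 1), (pfGraph N A).Adj pr.1 pr.2 := by
    intro i pr hpr
    rw [hLdef] at hpr
    simp only at hpr
    rw [zip_rotate_self] at hpr
    exact hladj i pr (List.mem_rotate.mp hpr)
  have hLcelnd : ∀ i, (circuitEdgeList (L i)).Nodup := by
    intro i; rw [hLdef]; simp only; rw [cel_rotate]
    exact ((List.rotate_perm _ _).nodup_iff).mpr (hlcelnd i)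
  have hLcel_mem : ∀ i x, x ∈ circuitEdgeList (L i) ↔ x ∈ Cs i := by
    intro i x
    rw [hLdef]; simp only; rw [cel_rotate, List.mem_rotate, hlE i]
    exact Iff.rfl
  have hL0 : ∀ i, (L i).getD 0 0 = p i := by
    intro i
    rw [hLdef]
    simp only
    have h0 : 0 < ((l i).rotate (jdx i)).length := by
      rw [List.length_rotate, hlen i]; exact hkpos i
    rw [List.getD_eq_getElem _ _ h0, List.getElem_rotate]
    simp only [Nat.zero_add, Nat.mod_eq_of_lt (hjlt i)]
    exact hjval i
  -- vertex function with wraparound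
  set vtx : Fin n → ℕ → ℕ := fun i m => (L i).getD (m % ks i) 0 with hvtxdef
  have hvtx0 : ∀ i, vtx i 0 = p i := by
    intro i
    rw [hvtxdef]
    simp only [Nat.zero_mod]
    exact hL0 i
  have hvtxk : ∀ i, vtx i (ks i) = p i := by
    intro i
    rw [hvtxdef]
    simp only [Nat.mod_self]
    exact hL0 i
  have hzplen : ∀ i, ((L i).zip ((L i).rotate 1)).length = ks i := by
    intro i
    simp only [List.length_zip, List.length_rotate, min_self]
    exact hLlen i
  have hzp_get : ∀ i m (hm : m < ks i),
      ((L i).zip ((L i).rotate 1))[m]'(by rw [hzplen i]; exact hm)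
        = (vtx i m, vtx i (m+1)) := by
    intro i m hm
    have hmL : m < (L i).length := by rw [hLlen i]; exact hm
    have hm1L : (m+1) % (L i).length < (L i).length := Nat.mod_lt _ (by omega)
    rw [List.getElem_zip]
    refine Prod.ext ?_ ?_
    · show (L i)[m] = vtx i m
      rw [hvtxdef]
      simp only
      rw [Nat.mod_eq_of_lt hm, List.getD_eq_getElem _ _ hmL]
    · show ((L i).rotate 1)[m]'(by rw [List.length_rotate]; exact hmL) = vtx i (m+1)
      rw [List.getElem_rotate, ← List.getD_eq_getElem (L i) 0 hm1L, hvtxdef]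
      simp only
      congr 1
      rw [hLlen i]
  have hadjm : ∀ i m, m < ks i → (pfGraph N A).Adj (vtx i m) (vtx i (m+1)) := by
    intro i m hm
    have hmz : m < ((L i).zip ((L i).rotate 1)).length := by rw [hzplen i]; exact hm
    have hmem := List.getElem_mem hmz
    rw [hzp_get i m hm] at hmem
    exact hLadj i _ hmem
  have hcellen : ∀ i, (circuitEdgeList (L i)).length = ks i := by
    intro i
    unfold circuitEdgeList
    rw [List.length_map]
    exact hzplen i
  have hedge_get : ∀ i m (hm : m < ks i),
      (circuitEdgeList (L i))[m]'(by rw [hcellen i]; exact hm)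
        = s(vtx i m, vtx i (m+1)) := by
    intro i m hm
    unfold circuitEdgeList
    rw [List.getElem_map, hzp_get i m hm]
  have hedge_mem : ∀ i m, m < ks i → s(vtx i m, vtx i (m+1)) ∈ Cs i := by
    intro i m hm
    rw [← hLcel_mem i, ← hedge_get i m hm]
    exact List.getElem_mem _
  have hedge_inj : ∀ i j m m', m < ks i → m' < ks j →
      s(vtx i m, vtx i (m+1)) = s(vtx j m', vtx j (m'+1)) → i = j ∧ m = m' := by
    intro i j m m' hm hm' heq
    by_cases hij : i = j
    · subst hij
      refine ⟨rfl, ?_⟩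
      rw [← hedge_get i m hm, ← hedge_get i m' hm'] at heq
      exact ((hLcelnd i).getElem_inj_iff).mp heq
    · exfalso
      have h1 := hedge_mem i m hm
      have h2 := hedge_mem j m' hm'
      rw [heq] at h1
      exact Set.disjoint_left.mp (hdisj i j hij) h1 h2
  -- p is injective (else we get a short even circuit)
  have hpinj : Function.Injective p := by
    intro s t hst
    by_contra hne
    have hhead : (L s).head (hLne s) = (L t).head (hLne t) := by
      have h0s : 0 < (L s).length := List.length_pos_iff.mpr (hLne s)
      have h0t : 0 < (L t).length := List.length_pos_iff.mpr (hLne t)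
      rw [List.head_eq_getElem, List.head_eq_getElem,
        ← List.getD_eq_getElem (L s) 0 h0s, ← List.getD_eq_getElem (L t) 0 h0t,
        hL0 s, hL0 t, hst]
    refine hNoCirc (ks s + ks t) {x | x ∈ circuitEdgeList (L s ++ L t)}
      ((hodd s).add_odd (hodd t)) ?_ ⟨L s ++ L t, ?_, ?_, ?_, ?_, rfl⟩
    · push_cast
      have h1 := hkle s
      have h2 := hkle t
      linarith
    · rw [List.length_append, hLlen s, hLlen t]
    · simp [hLne s]
    · intro pr hpr
      rw [zip_append_closed (hLne s) (hLne t) hhead] at hpr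
      rcases List.mem_append.mp hpr with h | h
      · exact hLadj s pr h
      · exact hLadj t pr h
    · rw [cel_append (hLne s) (hLne t) hhead, List.nodup_append]
      refine ⟨hLcelnd s, hLcelnd t, ?_⟩
      intro x hxs y hxt hxy
      subst hxy
      exact Set.disjoint_left.mp (hdisj s t hne) ((hLcel_mem s x).mp hxs)
        ((hLcel_mem t x).mp hxt)
  -- witness elements for edges
  have hend : ∀ {u v : ℕ}, (pfGraph N A).Adj u v → (u = 1 ∨ PLM N u) ∧ (v = 1 ∨ PLM N v) := by
    intro u v h
    simp only [pfGraph] at h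
    obtain ⟨hne, h | h | h⟩ := h
    · exact ⟨Or.inl h.1, Or.inr h.2.1⟩
    · exact ⟨Or.inr h.2.1, Or.inl h.1⟩
    · exact ⟨Or.inr h.1, Or.inr h.2.1⟩
  set w : ℕ → ℕ → ℕ := fun u v =>
    if h : (pfGraph N A).Adj u v then (adj_witness hA h).choose else 0 with hwdef
  have hwspec : ∀ {u v : ℕ} (h : (pfGraph N A).Adj u v), w u v ∈ A ∧
      ∀ q : ℕ, PLM N q → (w u v).factorization q
        = (if q = u then 1 else 0) + (if q = v then 1 else 0) := by
    intro u v h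
    rw [hwdef]
    simp only [dif_pos h]
    exact (adj_witness hA h).choose_spec
  have hWinj : ∀ {u v u' v' : ℕ}, (pfGraph N A).Adj u v → (pfGraph N A).Adj u' v' →
      w u v = w u' v' → s(u, v) = s(u', v') := by
    intro u v u' v' h h' hww
    have hvec : ∀ q : ℕ, PLM N q → ((if q = u then 1 else 0) + (if q = v then 1 else 0) : ℕ)
        = (if q = u' then 1 else 0) + (if q = v' then 1 else 0) := by
      intro q hq
      rw [← (hwspec h).2 q hq, hww, (hwspec h').2 q hq]
    have hne := h.ne
    have hne' := h'.ne
    have hone : ∀ {x : ℕ}, PLM N x → x ≠ 1 := fun hx => hx.1.ne_one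
    have hmem : ∀ {a b : ℕ}, (pfGraph N A).Adj a b →
        (∀ q : ℕ, PLM N q → ((if q = a then 1 else 0) + (if q = b then 1 else 0) : ℕ)
          = (if q = u then 1 else 0) + (if q = v then 1 else 0)) → a = u ∨ a = v := by
      intro a b hab hv2
      rcases (hend hab).1 with ha1 | haP
      · -- a = 1 : show 1 ∈ {u, v}
        subst ha1
        by_contra hcon
        push_neg at hcon
        have hu1 : u ≠ 1 := fun h1 => hcon.1 h1.symm
        have hv1 : v ≠ 1 := fun h1 => hcon.2 h1.symm
        have hPu : PLM N u := by
          rcases (hend h).1 with h1 | h1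
          · exact absurd h1 hu1
          · exact h1
        have hPv : PLM N v := by
          rcases (hend h).2 with h1 | h1
          · exact absurd h1 hv1
          · exact h1
        have hbP : PLM N b := by
          rcases (hend hab).2 with h1 | h1
          · exact absurd h1 (Ne.symm hab.ne)
          · exact h1
        have h3 := hv2 u hPu
        have h4 := hv2 v hPv
        rw [if_neg hu1, if_pos rfl, if_neg hne] at h3
        rw [if_neg hv1, if_pos rfl, if_neg (Ne.symm hne)] at h4
        by_cases hub : u = b
        · by_cases hvb : v = b
          · exact hne (hub.trans hvb.symm)
          · rw [if_neg hvb] at h4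
            omega
        · rw [if_neg hub] at h3
          omega
      · have h3 := hv2 a haP
        rw [if_pos rfl, if_neg hab.ne] at h3
        by_cases hau : a = u
        · exact Or.inl hau
        · right
          rw [if_neg hau] at h3
          by_cases hav : a = v
          · exact hav
          · rw [if_neg hav] at h3
            omega
    have hmem1 : u' = u ∨ u' = v := hmem h' (fun q hq => (hvec q hq).symm)
    have hmem2 : v' = u ∨ v' = v := by
      have h'' : (pfGraph N A).Adj v' u' := h'.symm
      refine hmem h'' (fun q hq => ?_)
      rw [add_comm ((if q = v' then 1 else 0) : ℕ)]
      exact (hvec q hq).symm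
    rw [Sym2.eq_iff]
    rcases hmem1 with h1 | h1 <;> rcases hmem2 with h2 | h2
    · exact absurd (h1.trans h2.symm) hne'
    · exact Or.inl ⟨h1.symm, h2.symm⟩
    · exact Or.inr ⟨h2.symm, h1.symm⟩
    · exact absurd (h1.trans h2.symm) hne'
  -- square witnesses
  have hPLMp : ∀ i, PLM N (p i) := fun i => (psq_witness hA (hpPsq i)).1
  choose c hcA hcval using fun i => (psq_witness hA (hpPsq i)).2
  have hcw : ∀ i, ∀ {u v : ℕ}, (pfGraph N A).Adj u v → c i ≠ w u v := by
    intro i u v h heq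
    have h1 := hcval i (p i) (hPLMp i)
    rw [if_pos rfl] at h1
    have h2 := (hwspec h).2 (p i) (hPLMp i)
    rw [heq, h2] at h1
    have hne := h.ne
    by_cases hpu : p i = u
    · by_cases hpv : p i = v
      · exact hne (hpu.symm.trans hpv)
      · rw [if_pos hpu, if_neg hpv] at h1
        omega
    · by_cases hpv : p i = v
      · rw [if_neg hpu, if_pos hpv] at h1
        omega
      · rw [if_neg hpu, if_neg hpv] at h1
        omega
  have hcinj : ∀ i j, c i = c j → i = j := by
    intro i j heq
    apply hpinj
    have h1 := hcval i (p i) (hPLMp i)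
    rw [if_pos rfl, heq, hcval j (p i) (hPLMp i)] at h1
    by_cases hpp : p i = p j
    · exact hpp
    · rw [if_neg hpp] at h1
      omega
  -- edge elements
  set we : Fin n → ℕ → ℕ := fun i m => w (vtx i m) (vtx i (m+1)) with hwedef
  have hweA : ∀ i m, m < ks i → we i m ∈ A := by
    intro i m hm
    rw [hwedef]
    exact (hwspec (hadjm i m hm)).1
  have hwe_val : ∀ i m, m < ks i → ∀ q, PLM N q → (we i m).factorization q
      = (if q = vtx i m then 1 else 0) + (if q = vtx i (m+1) then 1 else 0) := by
    intro i m hm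
    rw [hwedef]
    exact (hwspec (hadjm i m hm)).2
  have hwe_inj : ∀ i j m m', m < ks i → m' < ks j → we i m = we j m' → i = j ∧ m = m' := by
    intro i j m m' hm hm' heq
    rw [hwedef] at heq
    simp only at heq
    exact hedge_inj i j m m' hm hm' (hWinj (hadjm i m hm) (hadjm j m' hm') heq)
  have hcwe : ∀ i j m, m < ks j → c i ≠ we j m := by
    intro i j m hm
    rw [hwedef]
    exact hcw i (hadjm j m hm)
  -- the two finsets per cycle
  set Ev : Fin n → Finset ℕ := fun i => (Finset.range (ks i)).filter (fun m => m % 2 = 0)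
    with hEvdef
  set Od : Fin n → Finset ℕ := fun i => (Finset.range (ks i)).filter (fun m => m % 2 = 1)
    with hOddef
  have hEvmem : ∀ i m, m ∈ Ev i ↔ (m < ks i ∧ m % 2 = 0) := by
    intro i m
    rw [hEvdef]
    simp only [Finset.mem_filter, Finset.mem_range]
  have hOdmem : ∀ i m, m ∈ Od i ↔ (m < ks i ∧ m % 2 = 1) := by
    intro i m
    rw [hOddef]
    simp only [Finset.mem_filter, Finset.mem_range]
  set Bf : Fin n → Finset ℕ := fun i => (Ev i).image (we i) with hBfdef
  set Cf : Fin n → Finset ℕ := fun i => insert (c i) ((Od i).image (we i)) with hCfdef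
  have hBfmem : ∀ i x, x ∈ Bf i ↔ ∃ m, (m < ks i ∧ m % 2 = 0) ∧ we i m = x := by
    intro i x
    rw [hBfdef]
    simp only [Finset.mem_image]
    constructor
    · rintro ⟨m, hm, hx⟩
      exact ⟨m, (hEvmem i m).mp hm, hx⟩
    · rintro ⟨m, hm, hx⟩
      exact ⟨m, (hEvmem i m).mpr hm, hx⟩
  have hCfmem : ∀ i x, x ∈ Cf i ↔ (x = c i ∨ ∃ m, (m < ks i ∧ m % 2 = 1) ∧ we i m = x) := by
    intro i x
    rw [hCfdef]
    simp only [Finset.mem_insert, Finset.mem_image]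
    constructor
    · rintro (h | ⟨m, hm, hx⟩)
      · exact Or.inl h
      · exact Or.inr ⟨m, (hOdmem i m).mp hm, hx⟩
    · rintro (h | ⟨m, hm, hx⟩)
      · exact Or.inl h
      · exact Or.inr ⟨m, (hOdmem i m).mpr hm, hx⟩
  have hBfA : ∀ i x, x ∈ Bf i → x ∈ A := by
    intro i x hx
    obtain ⟨m, hm, hx⟩ := (hBfmem i x).mp hx
    rw [← hx]
    exact hweA i m hm.1
  have hCfA : ∀ i x, x ∈ Cf i → x ∈ A := by
    intro i x hx
    rcases (hCfmem i x).mp hx with h | ⟨m, hm, hx⟩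
    · rw [h]; exact hcA i
    · rw [← hx]; exact hweA i m hm.1
  -- disjointness
  have hBB : ∀ i j, i ≠ j → Disjoint (Bf i) (Bf j) := by
    intro i j hij
    rw [Finset.disjoint_left]
    intro x hxi hxj
    obtain ⟨m, hm, hx⟩ := (hBfmem i x).mp hxi
    obtain ⟨m', hm', hx'⟩ := (hBfmem j x).mp hxj
    exact hij (hwe_inj i j m m' hm.1 hm'.1 (hx.trans hx'.symm)).1
  have hCC : ∀ i j, i ≠ j → Disjoint (Cf i) (Cf j) := by
    intro i j hij
    rw [Finset.disjoint_left]
    intro x hxi hxj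
    rcases (hCfmem i x).mp hxi with h | ⟨m, hm, hx⟩ <;>
      rcases (hCfmem j x).mp hxj with h' | ⟨m', hm', hx'⟩
    · exact hij (hcinj i j (h.symm.trans h' |>.symm ▸ rfl : c i = c j))
    · exact hcwe i j m' hm'.1 (h ▸ hx'.symm ▸ rfl)
    · exact hcwe j i m hm.1 (h' ▸ hx.symm ▸ rfl)
    · exact hij (hwe_inj i j m m' hm.1 hm'.1 (hx.trans hx'.symm)).1
  have hBC : ∀ i j, Disjoint (Bf i) (Cf j) := by
    intro i j
    rw [Finset.disjoint_left]
    intro x hxi hxj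
    obtain ⟨m, hm, hx⟩ := (hBfmem i x).mp hxi
    rcases (hCfmem j x).mp hxj with h | ⟨m', hm', hx'⟩
    · exact hcwe j i m hm.1 (h ▸ hx.symm ▸ rfl)
    · obtain ⟨rfl, rfl⟩ := hwe_inj i j m m' hm.1 hm'.1 (hx.trans hx'.symm)
      omega
  -- products over the two finsets
  have hApos : ∀ x ∈ A, 0 < x := fun x hx => (hAbd x hx).1
  set Pt : Fin n → ℕ := fun i => ∏ x ∈ Bf i, x with hPtdef
  set Qt : Fin n → ℕ := fun i => ∏ x ∈ Cf i, x with hQtdef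
  have hPtpos : ∀ i, 0 < Pt i := by
    intro i
    rw [hPtdef]
    exact Finset.prod_pos (fun x hx => hApos x (hBfA i x hx))
  have hQtpos : ∀ i, 0 < Qt i := by
    intro i
    rw [hQtdef]
    exact Finset.prod_pos (fun x hx => hApos x (hCfA i x hx))
  have hPt_fact : ∀ i q, (Pt i).factorization q = ∑ m ∈ Ev i, (we i m).factorization q := by
    intro i q
    have hinj : ∀ m ∈ Ev i, ∀ m' ∈ Ev i, we i m = we i m' → m = m' := by
      intro m hm m' hm' heq
      exact (hwe_inj i i m m' ((hEvmem i m).mp hm).1 ((hEvmem i m').mp hm').1 heq).2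
    have h1 : Pt i = ∏ m ∈ Ev i, we i m := by
      rw [hPtdef]
      simp only
      rw [hBfdef]
      simp only
      exact Finset.prod_image hinj
    have h2 : (∏ m ∈ Ev i, we i m).factorization = ∑ m ∈ Ev i, (we i m).factorization :=
      Nat.factorization_prod (fun m hm => (hApos _ (hweA i m ((hEvmem i m).mp hm).1)).ne')
    rw [h1, h2]
    exact Finsupp.finset_sum_apply _ _ _
  have hQt_fact : ∀ i q, (Qt i).factorization q
      = (c i).factorization q + ∑ m ∈ Od i, (we i m).factorization q := by
    intro i q
    have hinj : ∀ m ∈ Od i, ∀ m' ∈ Od i, we i m = we i m' → m = m' := by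
      intro m hm m' hm' heq
      exact (hwe_inj i i m m' ((hOdmem i m).mp hm).1 ((hOdmem i m').mp hm').1 heq).2
    have hcnot : c i ∉ (Od i).image (we i) := by
      intro hmem
      obtain ⟨m, hm, hx⟩ := Finset.mem_image.mp hmem
      exact hcwe i i m ((hOdmem i m).mp hm).1 hx.symm
    have h1 : Qt i = c i * ∏ m ∈ Od i, we i m := by
      rw [hQtdef]
      simp only
      rw [hCfdef]
      simp only
      rw [Finset.prod_insert hcnot, Finset.prod_image hinj]
    have hprodpos : 0 < ∏ m ∈ Od i, we i m :=
      Finset.prod_pos (fun m hm => hApos _ (hweA i m ((hOdmem i m).mp hm).1))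
    have h2 : (c i * ∏ m ∈ Od i, we i m).factorization
        = (c i).factorization + (∏ m ∈ Od i, we i m).factorization :=
      Nat.factorization_mul (hApos _ (hcA i)).ne' hprodpos.ne'
    have h3 : (∏ m ∈ Od i, we i m).factorization = ∑ m ∈ Od i, (we i m).factorization :=
      Nat.factorization_prod (fun m hm => (hApos _ (hweA i m ((hOdmem i m).mp hm).1)).ne')
    rw [h1]
    rw [show ((c i * ∏ m ∈ Od i, we i m).factorization) q
        = ((c i).factorization + (∏ m ∈ Od i, we i m).factorization) q from by rw [h2]]
    rw [Finsupp.add_apply]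
    congr 1
    rw [h3]
    exact Finsupp.finset_sum_apply _ _ _
  -- the key balance identity at medium/large primes
  have hbal : ∀ i q, PLM N q → (Pt i).factorization q = (Qt i).factorization q := by
    intro i q hq
    set G : ℕ → ℕ := fun m => if q = vtx i m then 1 else 0 with hGdef
    have hgk : G (ks i) = G 0 := by
      rw [hGdef]
      simp only
      rw [hvtxk i, hvtx0 i]
    have hA1 := alt_sum_even (hodd i) G hgk
    have hB1 := alt_sum_odd (hodd i) G
    have hG0 : G 0 = if q = p i then 1 else 0 := by
      rw [hGdef]
      simp only
      rw [hvtx0 i]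
    have hEv1 : ∑ m ∈ Ev i, (we i m).factorization q = ∑ m ∈ Ev i, (G m + G (m+1)) := by
      apply Finset.sum_congr rfl
      intro m hm
      rw [hwe_val i m ((hEvmem i m).mp hm).1 q hq, hGdef]
    have hOd1 : ∑ m ∈ Od i, (we i m).factorization q = ∑ m ∈ Od i, (G m + G (m+1)) := by
      apply Finset.sum_congr rfl
      intro m hm
      rw [hwe_val i m ((hOdmem i m).mp hm).1 q hq, hGdef]
    have hEv2 : ∑ m ∈ Ev i, (G m + G (m+1)) = (∑ m ∈ Finset.range (ks i), G m) + G 0 := by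
      simp only [hEvdef]
      exact hA1
    have hOd2 : (∑ m ∈ Od i, (G m + G (m+1))) + G 0 = ∑ m ∈ Finset.range (ks i), G m := by
      simp only [hOddef]
      exact hB1
    rw [hPt_fact i q, hQt_fact i q, hEv1, hOd1, hcval i q hq, hEv2]
    by_cases hqp : q = p i
    · rw [if_pos hqp] at hG0 ⊢
      omega
    · rw [if_neg hqp] at hG0 ⊢
      omega
  -- global products over sets of cycles
  set PP : Finset (Fin n) → ℕ := fun T => ∏ t ∈ T, Pt t with hPPdef
  set QQ : Finset (Fin n) → ℕ := fun T => ∏ t ∈ T, Qt t with hQQdef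
  have hPPpos : ∀ T, 0 < PP T := by
    intro T
    rw [hPPdef]
    exact Finset.prod_pos (fun t _ => hPtpos t)
  have hQQpos : ∀ T, 0 < QQ T := by
    intro T
    rw [hQQdef]
    exact Finset.prod_pos (fun t _ => hQtpos t)
  have hPP_fact : ∀ T q, (PP T).factorization q = ∑ t ∈ T, (Pt t).factorization q := by
    intro T q
    rw [hPPdef]
    simp only
    rw [Nat.factorization_prod (fun t _ => (hPtpos t).ne')]
    exact Finsupp.finset_sum_apply _ _ _
  have hQQ_fact : ∀ T q, (QQ T).factorization q = ∑ t ∈ T, (Qt t).factorization q := by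
    intro T q
    rw [hQQdef]
    simp only
    rw [Nat.factorization_prod (fun t _ => (hQtpos t).ne')]
    exact Finsupp.finset_sum_apply _ _ _
  have hXB : ∀ T, PP T = ∏ x ∈ T.biUnion Bf, x := by
    intro T
    rw [hPPdef]
    simp only
    rw [Finset.prod_biUnion (fun a _ b _ hab => hBB a b hab)]
  have hXC : ∀ T, QQ T = ∏ x ∈ T.biUnion Cf, x := by
    intro T
    rw [hQQdef]
    simp only
    rw [Finset.prod_biUnion (fun a _ b _ hab => hCC a b hab)]
  -- valuation bounds
  have hvq_elem : ∀ x ∈ A, ∀ q, x.factorization q ≤ N :=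
    fun x hx q => vq_le_N (hAbd x hx).1 (hAbd x hx).2
  have hcardA : A.card ≤ N := by
    have hsub : A ⊆ Finset.Icc 1 N := fun x hx => Finset.mem_Icc.mpr (hAbd x hx)
    calc A.card ≤ (Finset.Icc 1 N).card := Finset.card_le_card hsub
    _ = N := by rw [Nat.card_Icc]; omega
  have hprod_bound : ∀ (S : Finset ℕ), (∀ x ∈ S, x ∈ A) → ∀ q,
      (∏ x ∈ S, x).factorization q ≤ N * N := by
    intro S hSA q
    rw [Nat.factorization_prod (fun x hx => (hApos x (hSA x hx)).ne')]
    rw [Finsupp.finset_sum_apply]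
    calc ∑ x ∈ S, x.factorization q ≤ ∑ _x ∈ S, N :=
        Finset.sum_le_sum (fun x hx => hvq_elem x (hSA x hx) q)
    _ = S.card * N := by rw [Finset.sum_const, smul_eq_mul]
    _ ≤ N * N := by
        have h2 : S.card ≤ A.card := Finset.card_le_card (fun x hx => hSA x hx)
        exact Nat.mul_le_mul (h2.trans hcardA) le_rfl
  have hPPb : ∀ T q, (PP T).factorization q ≤ N * N := by
    intro T q
    rw [hXB T]
    apply hprod_bound
    intro x hx
    obtain ⟨a, _, hxa⟩ := Finset.mem_biUnion.mp hx
    exact hBfA a x hxa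
  have hQQb : ∀ T q, (QQ T).factorization q ≤ N * N := by
    intro T q
    rw [hXC T]
    apply hprod_bound
    intro x hx
    obtain ⟨a, _, hxa⟩ := Finset.mem_biUnion.mp hx
    exact hCfA a x hxa
  -- small primes
  set D : ℕ := ⌊(N:ℝ) ^ ((1:ℝ)/3)⌋₊ with hDdef
  set SP : Finset ℕ := (Finset.range (D+1)).filter Nat.Prime with hSPdef
  have hSPout : ∀ q, q ∉ SP → ∀ T, (PP T).factorization q = (QQ T).factorization q := by
    intro q hq T
    by_cases hprime : q.Prime
    · have hqD : D < q := by
        by_contra hc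
        push_neg at hc
        refine hq ?_
        rw [hSPdef]
        exact Finset.mem_filter.mpr ⟨Finset.mem_range.mpr (by omega), hprime⟩
      have hq3 : (N:ℝ) ^ ((1:ℝ)/3) < q := by
        have h1 : (N:ℝ) ^ ((1:ℝ)/3) < (D:ℝ) + 1 := by
          rw [hDdef]
          exact Nat.lt_floor_add_one _
        have h2 : (D:ℝ) + 1 ≤ q := by exact_mod_cast hqD
        linarith
      by_cases hqN : q ≤ N
      · have hPLMq : PLM N q := ⟨hprime, hq3, hqN⟩
        rw [hPP_fact, hQQ_fact]
        exact Finset.sum_congr rfl (fun t _ => hbal t q hPLMq)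
      · have hz : ∀ x ∈ A, x.factorization q = 0 := by
          intro x hx
          apply Nat.factorization_eq_zero_of_not_dvd
          intro hdvd
          have h1 := Nat.le_of_dvd (hApos x hx) hdvd
          have h2 := (hAbd x hx).2
          omega
        have hz2 : ∀ t, (Pt t).factorization q = 0 := by
          intro t
          rw [hPt_fact]
          exact Finset.sum_eq_zero (fun m hm => hz _ (hweA t m ((hEvmem t m).mp hm).1))
        have hz3 : ∀ t, (Qt t).factorization q = 0 := by
          intro t
          rw [hQt_fact, hz _ (hcA t),
            Finset.sum_eq_zero (fun m hm => hz _ (hweA t m ((hOdmem t m).mp hm).1))]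
          omega
        rw [hPP_fact, hQQ_fact]
        rw [Finset.sum_congr rfl (fun t _ => hz2 t), Finset.sum_congr rfl (fun t _ => hz3 t)]
    · rw [Nat.factorization_eq_zero_of_not_prime _ hprime,
        Nat.factorization_eq_zero_of_not_prime _ hprime]
  -- key injectivity via distinct subset products
  have hkey : ∀ T T' : Finset (Fin n),
      (∀ q ∈ SP, ((PP T).factorization q : ℤ) - ((QQ T).factorization q : ℤ)
        = ((PP T').factorization q : ℤ) - ((QQ T').factorization q : ℤ)) → T = T' := by
    intro T T' hqq
    have hfac : ∀ q, (PP T).factorization q + (QQ T').factorization q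
        = (PP T').factorization q + (QQ T).factorization q := by
      intro q
      by_cases hq : q ∈ SP
      · have := hqq q hq
        omega
      · have h1 := hSPout q hq T
        have h2 := hSPout q hq T'
        omega
    have hmul : PP T * QQ T' = PP T' * QQ T := by
      have h0 : PP T * QQ T' ≠ 0 := (Nat.mul_pos (hPPpos T) (hQQpos T')).ne'
      have h0' : PP T' * QQ T ≠ 0 := (Nat.mul_pos (hPPpos T') (hQQpos T)).ne'
      apply Nat.factorization_inj (Set.mem_setOf.mpr h0) (Set.mem_setOf.mpr h0')
      rw [Nat.factorization_mul (hPPpos T).ne' (hQQpos T').ne',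
        Nat.factorization_mul (hPPpos T').ne' (hQQpos T).ne']
      ext q
      simp only [Finsupp.coe_add, Pi.add_apply]
      exact hfac q
    have hXdisj : ∀ (S S' : Finset (Fin n)), Disjoint (S.biUnion Bf) (S'.biUnion Cf) := by
      intro S S'
      rw [Finset.disjoint_left]
      intro x hx1 hx2
      obtain ⟨a, _, hxa⟩ := Finset.mem_biUnion.mp hx1
      obtain ⟨b, _, hxb⟩ := Finset.mem_biUnion.mp hx2
      exact Finset.disjoint_left.mp (hBC a b) hxa hxb
    have hXprod : ∀ (S S' : Finset (Fin n)),
        PP S * QQ S' = ∏ x ∈ S.biUnion Bf ∪ S'.biUnion Cf, x := by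
      intro S S'
      rw [Finset.prod_union (hXdisj S S'), hXB S, hXC S']
    have hXsubA : ∀ (S S' : Finset (Fin n)),
        ↑(S.biUnion Bf ∪ S'.biUnion Cf) ⊆ (↑A : Set ℕ) := by
      intro S S'
      intro x hx
      simp only [Finset.coe_union, Set.mem_union, Finset.mem_coe] at hx
      rcases hx with hx | hx
      · obtain ⟨a, _, hxa⟩ := Finset.mem_biUnion.mp hx
        exact hBfA a x hxa
      · obtain ⟨a, _, hxa⟩ := Finset.mem_biUnion.mp hx
        exact hCfA a x hxa
    have hsets : T.biUnion Bf ∪ T'.biUnion Cf = T'.biUnion Bf ∪ T.biUnion Cf := by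
      apply hDSP _ _ (hXsubA T T') (hXsubA T' T)
      rw [← hXprod T T', ← hXprod T' T]
      exact hmul
    have hTsub : ∀ (S S' : Finset (Fin n)),
        S.biUnion Bf ∪ S'.biUnion Cf = S'.biUnion Bf ∪ S.biUnion Cf → S ⊆ S' := by
      intro S S' hEq t ht
      by_contra hnot
      have h0mem : we t 0 ∈ Bf t := (hBfmem t _).mpr ⟨0, ⟨hkpos t, by norm_num⟩, rfl⟩
      have hx : we t 0 ∈ S.biUnion Bf ∪ S'.biUnion Cf :=
        Finset.mem_union_left _ (Finset.mem_biUnion.mpr ⟨t, ht, h0mem⟩)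
      rw [hEq] at hx
      rcases Finset.mem_union.mp hx with hx | hx
      · obtain ⟨b, hbS', hxb⟩ := Finset.mem_biUnion.mp hx
        obtain ⟨m, hm, hxm⟩ := (hBfmem b _).mp hxb
        obtain ⟨rfl, -⟩ := hwe_inj b t m 0 hm.1 (hkpos t) hxm
        exact hnot hbS'
      · obtain ⟨b, hbS, hxb⟩ := Finset.mem_biUnion.mp hx
        rcases (hCfmem b _).mp hxb with hxc | ⟨m, hm, hxm⟩
        · exact hcwe b t 0 (hkpos t) hxc.symm
        · obtain ⟨rfl, hm0⟩ := hwe_inj b t m 0 hm.1 (hkpos t) hxm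
          omega
    exact Finset.Subset.antisymm (hTsub T T' hsets) (hTsub T' T hsets.symm)
  -- the counting step
  have hcard : 2 ^ n ≤ (2 * (N * N) + 1) ^ SP.card := by
    have hIcc : ∀ (T : Finset (Fin n)) (q : ℕ),
        ((PP T).factorization q : ℤ) - ((QQ T).factorization q : ℤ)
          ∈ Finset.Icc (-(N * N : ℤ)) ((N * N : ℤ)) := by
      intro T q
      rw [Finset.mem_Icc]
      have h1 := hPPb T q
      have h2 := hQQb T q
      constructor <;> push_cast <;> omega
    set F : Finset (Fin n) → ({q // q ∈ SP} → {z : ℤ // z ∈ Finset.Icc (-(N * N : ℤ)) ((N * N : ℤ))}) :=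
      fun T q => ⟨((PP T).factorization q.1 : ℤ) - ((QQ T).factorization q.1 : ℤ),
        hIcc T q.1⟩ with hFdef
    have hFinj : Function.Injective F := by
      intro T T' hF
      apply hkey T T'
      intro q hq
      have h1 := congrFun hF ⟨q, hq⟩
      rw [hFdef] at h1
      simp only at h1
      exact Subtype.ext_iff.mp h1
    calc 2 ^ n = Fintype.card (Finset (Fin n)) := by
          rw [Fintype.card_finset, Fintype.card_fin]
    _ ≤ Fintype.card ({q // q ∈ SP} → {z : ℤ // z ∈ Finset.Icc (-(N * N : ℤ)) ((N * N : ℤ))}) :=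
          Fintype.card_le_of_injective F hFinj
    _ = Fintype.card {z : ℤ // z ∈ Finset.Icc (-(N * N : ℤ)) ((N * N : ℤ))}
          ^ Fintype.card {q // q ∈ SP} := Fintype.card_fun
    _ = (2 * (N * N) + 1) ^ SP.card := by
          rw [Fintype.card_coe, Fintype.card_coe]
          congr 1
          rw [Int.card_Icc]
          rw [show ((N * N : ℤ) + 1 - -(N * N : ℤ)) = ((2 * (N * N) + 1 : ℕ) : ℤ) from by
            push_cast; ring]
          exact Int.toNat_natCast _
  -- final real arithmetic
  have hNR : (4:ℝ) ≤ (N:ℝ) := by exact_mod_cast hN4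
  have hN0 : (0:ℝ) < (N:ℝ) := by linarith
  have hsc : (SP.card : ℝ) ≤ 2 * (N:ℝ) ^ ((1:ℝ)/3) := by
    have h1 : SP.card ≤ D + 1 := by
      rw [hSPdef]
      calc ((Finset.range (D+1)).filter Nat.Prime).card ≤ (Finset.range (D+1)).card :=
          Finset.card_filter_le _ _
      _ = D + 1 := Finset.card_range _
    have h2 : (D:ℝ) ≤ (N:ℝ) ^ ((1:ℝ)/3) := by
      rw [hDdef]
      exact Nat.floor_le (Real.rpow_nonneg hN0.le _)
    have h3 : (1:ℝ) ≤ (N:ℝ) ^ ((1:ℝ)/3) := by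
      have h5 := Real.rpow_le_rpow (by norm_num : (0:ℝ) ≤ 1) (by linarith : (1:ℝ) ≤ (N:ℝ))
        (by norm_num : (0:ℝ) ≤ 1/3)
      rwa [Real.one_rpow] at h5
    have h4 : (SP.card : ℝ) ≤ (D:ℝ) + 1 := by exact_mod_cast h1
    linarith
  have hM1 : (1:ℝ) ≤ 2 * (N:ℝ) * (N:ℝ) + 1 := by nlinarith
  have hlogineq : (n:ℝ) * Real.log 2 ≤ (SP.card : ℝ) * Real.log (2 * (N:ℝ) * (N:ℝ) + 1) := by
    have h1 : ((2:ℝ)) ^ n ≤ (2 * (N:ℝ) * (N:ℝ) + 1) ^ SP.card := by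
      have := hcard
      have hcast : ((2 ^ n : ℕ) : ℝ) ≤ (((2 * (N * N) + 1) ^ SP.card : ℕ) : ℝ) := by
        exact_mod_cast this
      push_cast at hcast
      convert hcast using 2
      ring
    have h2 := Real.log_le_log (by positivity) h1
    rw [Real.log_pow, Real.log_pow] at h2
    exact_mod_cast h2
  have hlogM : Real.log (2 * (N:ℝ) * (N:ℝ) + 1) ≤ 4 * Real.log N := by
    have h16 : (16:ℝ) ≤ (N:ℝ) * N := by nlinarith
    have h1 : 2 * (N:ℝ) * (N:ℝ) + 1 ≤ (N:ℝ) ^ (4:ℕ) := by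
      have h2 : ((N:ℝ)) ^ (4:ℕ) = ((N:ℝ) * N) * ((N:ℝ) * N) := by ring
      rw [h2]
      nlinarith
    have h2 := Real.log_le_log (by nlinarith) h1
    rw [Real.log_pow] at h2
    push_cast at h2
    linarith
  have hlogN : Real.log N ≤ (N:ℝ) ^ ε / ε := by
    have h1 : Real.log ((N:ℝ) ^ ε) = ε * Real.log N := Real.log_rpow hN0 ε
    have h3 : (0:ℝ) < (N:ℝ) ^ ε := Real.rpow_pos_of_pos hN0 ε
    have h2 : Real.log ((N:ℝ) ^ ε) ≤ (N:ℝ) ^ ε - 1 := Real.log_le_sub_one_of_pos h3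
    rw [h1] at h2
    rw [le_div_iff₀ hε]
    nlinarith
  have hlogNnn : (0:ℝ) ≤ Real.log N := Real.log_nonneg (by linarith)
  have hstep : (n:ℝ) * Real.log 2
      ≤ (2 * (N:ℝ) ^ ((1:ℝ)/3)) * (4 * ((N:ℝ) ^ ε / ε)) := by
    have hX : (0:ℝ) ≤ 2 * (N:ℝ) ^ ((1:ℝ)/3) := by positivity
    have hlogMnn : (0:ℝ) ≤ Real.log (2 * (N:ℝ) * (N:ℝ) + 1) := Real.log_nonneg hM1
    calc (n:ℝ) * Real.log 2 ≤ (SP.card : ℝ) * Real.log (2 * (N:ℝ) * (N:ℝ) + 1) := hlogineq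
    _ ≤ (2 * (N:ℝ) ^ ((1:ℝ)/3)) * Real.log (2 * (N:ℝ) * (N:ℝ) + 1) :=
        mul_le_mul_of_nonneg_right hsc hlogMnn
    _ ≤ (2 * (N:ℝ) ^ ((1:ℝ)/3)) * (4 * Real.log N) := by
        apply mul_le_mul_of_nonneg_left _ hX
        linarith
    _ ≤ (2 * (N:ℝ) ^ ((1:ℝ)/3)) * (4 * ((N:ℝ) ^ ε / ε)) := by
        apply mul_le_mul_of_nonneg_left _ hX
        linarith
  have hrpadd : (N:ℝ) ^ ((1:ℝ)/3) * (N:ℝ) ^ ε = (N:ℝ) ^ ((1:ℝ)/3 + ε) :=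
    (Real.rpow_add hN0 _ _).symm
  have hfinal : (n:ℝ) ≤ 8 / (ε * Real.log 2) * (N:ℝ) ^ ((1:ℝ)/3 + ε) := by
    have h := (le_div_iff₀ hlog2).mpr hstep
    calc (n:ℝ) ≤ (2 * (N:ℝ) ^ ((1:ℝ)/3)) * (4 * ((N:ℝ) ^ ε / ε)) / Real.log 2 := h
    _ = 8 / (ε * Real.log 2) * ((N:ℝ) ^ ((1:ℝ)/3) * (N:ℝ) ^ ε) := by
        field_simp
        ring
    _ = 8 / (ε * Real.log 2) * (N:ℝ) ^ ((1:ℝ)/3 + ε) := by rw [hrpadd]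
  have hrnn : (0:ℝ) ≤ (N:ℝ) ^ ((1:ℝ)/3 + ε) := Real.rpow_nonneg hN0.le _
  nlinarith
end

section
/- Let N ∈ ℕ and let A ⊆ [N]. Suppose the prime factorization graph G = G(A), with edge set E, contains no circuit of even length at most 2·N^{1/12} and no cycle of odd length at most N^{1/12} containing a vertex from P_□, where P_□ = {p prime : N^{1/3} < p ≤ N^{1/2} and p² ∣ a for some a ∈ A} and P_{¬□} = P_med \ P_□. Then there is a set of edges E' ⊆ E of size at most (|P_{¬□}| + 1)/2 such that the graph with edge set E \ E' contains no cycle of length at most N^{1/12}. -/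
/-- `Pmed N` is the set of primes in `(N^{1/3}, N^{1/2}]`. -/
def Pmed (N : ℕ) : Set ℕ :=
  {p : ℕ | p.Prime ∧ (N : ℝ) ^ ((1 : ℝ) / 3) < (p : ℝ) ∧ (p : ℝ) ≤ (N : ℝ) ^ ((1 : ℝ) / 2)}

set_option linter.unusedSectionVars false

section Helpers

open SimpleGraph

namespace Stmt13

variable {V : Type*} {G : SimpleGraph V}

lemma walk_zip_adj {a b : V} (w : G.Walk a b) :
    ∀ p ∈ w.support.zip w.support.tail, G.Adj p.1 p.2 := by
  induction w with
  | nil => simp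
  | cons h w' ih =>
    intro p hp
    rw [Walk.support_cons] at hp
    rcases w' with _ | ⟨h', w''⟩
    · simp at hp; subst hp; exact h
    · rw [Walk.support_cons] at hp
      simp only [List.tail_cons, List.zip_cons_cons, List.mem_cons] at hp
      rcases hp with rfl | hp
      · exact h
      · exact ih p (by rw [Walk.support_cons]; simpa using hp)

lemma walk_zip_edges {a b : V} (w : G.Walk a b) :
    (w.support.zip w.support.tail).map (fun p => s(p.1, p.2)) = w.edges := by
  induction w with
  | nil => simp
  | cons h w' ih =>
    rw [Walk.support_cons, Walk.edges_cons, ← ih]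
    rw [w'.support_eq_cons]
    simp only [List.zip_cons_cons, List.map_cons, List.tail_cons]

end Stmt13

namespace Stmt13b
open Stmt13

variable {V : Type*} {G : SimpleGraph V}

lemma closed_walk_list {u : V} (W : G.Walk u u) (hW : W ≠ Walk.nil) :
    (W.support.dropLast).length = W.length ∧ W.support.dropLast ≠ [] ∧
    (W.support.dropLast).zip ((W.support.dropLast).rotate 1)
      = W.support.zip W.support.tail := by
  have hlen : 1 ≤ W.length := by
    rcases Nat.eq_zero_or_pos W.length with h | h
    · exact absurd (Walk.length_eq_zero_iff.mp h).eq_nil hW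
    · exact h
  have hlength : (W.support.dropLast).length = W.length := by
    rw [List.length_dropLast, W.length_support]; omega
  have htlen : W.support.tail.length = W.length := by
    rw [List.length_tail, W.length_support]; omega
  have hne : W.support.dropLast ≠ [] := by
    intro h
    rw [h] at hlength
    simp at hlength
    omega
  have h3 : W.support.dropLast ++ [u] = W.support := by
    have := List.dropLast_append_getLast (l := W.support) W.support_ne_nil
    rwa [W.getLast_support] at this
  obtain ⟨a, l'', hl⟩ := List.exists_cons_of_ne_nil hne
  have h4 : u :: W.support.tail = (a :: l'') ++ [u] := by
    rw [← hl, h3]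
    conv_lhs => rw [W.support_eq_cons]
    rw [List.tail_cons]
    exact W.support_eq_cons.symm
  rw [List.cons_append, List.cons.injEq] at h4
  obtain ⟨rfl, h5⟩ := h4
  have hrot : (W.support.dropLast).rotate 1 = W.support.tail := by
    rw [hl, List.rotate_cons_succ, List.rotate_zero, h5]
  have key : ∀ (l₁ r l₂ : List V), l₁.length = l₂.length → (l₁ ++ r).zip l₂ = l₁.zip l₂ := by
    intro l₁ r l₂ h
    conv_lhs => rw [show l₂ = l₂ ++ [] from (List.append_nil _).symm]
    rw [List.zip_append h]; simp
  refine ⟨hlength, hne, ?_⟩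
  rw [hrot, hl, h5, ← h3, hl]
  rw [key (u :: l'') [u] (l'' ++ [u]) (by simp)]

lemma isCircuit_of_walk {u : V} (W : G.Walk u u) (h : W.IsCircuit) :
    IsCircuit G W.length {e | e ∈ W.edges} := by
  obtain ⟨hlen, hne, hzip⟩ := closed_walk_list W h.ne_nil
  refine ⟨W.support.dropLast, hlen, hne, ?_, ?_, ?_⟩
  · rw [hzip]; exact walk_zip_adj W
  · show (circuitEdgeList _).Nodup
    rw [circuitEdgeList, hzip, walk_zip_edges]
    exact h.edges_nodup
  · rw [circuitEdgeList, hzip, walk_zip_edges]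

end Stmt13b

namespace Stmt13c
open Stmt13

variable {V : Type*} {G : SimpleGraph V}

/-- Build a walk from a chain of adjacencies. -/
def mkWalk : ∀ (a : V) (l : List V) (b : V), List.Chain G.Adj a (l ++ [b]) → G.Walk a b
  | a, [], b, h => Walk.cons (by simpa using List.chain_cons.mp h |>.1) Walk.nil
  | a, c :: l, b, h =>
    Walk.cons (List.chain_cons.mp h).1 (mkWalk c l b (List.chain_cons.mp h).2)

lemma mkWalk_support : ∀ (a : V) (l : List V) (b : V) (h : List.Chain G.Adj a (l ++ [b])),
    (mkWalk a l b h : G.Walk a b).support = a :: (l ++ [b])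
  | a, [], b, h => by simp [mkWalk]
  | a, c :: l, b, h => by
    rw [mkWalk, Walk.support_cons]
    simp only [List.cons.injEq, true_and]
    exact mkWalk_support c l b _

lemma chain_of_zip : ∀ (m : List V) (a : V), (∀ p ∈ (a :: m).zip m, G.Adj p.1 p.2) →
    List.Chain G.Adj a m
  | [], a, _ => List.Chain.nil
  | c :: m', a, h => by
    refine List.Chain.cons (h (a, c) (by simp)) (chain_of_zip m' c ?_)
    intro p hp
    exact h p (by simp only [List.zip_cons_cons, List.mem_cons]; exact Or.inr hp)

lemma zip_append_left (l₁ r l₂ : List V) (h : l₁.length = l₂.length) :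
    (l₁ ++ r).zip l₂ = l₁.zip l₂ := by
  conv_lhs => rw [show l₂ = l₂ ++ [] from (List.append_nil _).symm]
  rw [List.zip_append h]; simp

/-- From list-cycle data, build a walk-based cycle. -/
lemma walk_of_list {l : List V} (hne : l ≠ [])
    (hadj : ∀ p ∈ l.zip (l.rotate 1), G.Adj p.1 p.2)
    (hnd : l.Nodup) (hed : (circuitEdgeList l).Nodup) :
    ∃ (v : V) (W : G.Walk v v), W.IsCycle ∧ W.length = l.length ∧
      W.edges = circuitEdgeList l ∧ ∀ x, x ∈ W.support ↔ x ∈ l := by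
  obtain ⟨v, t, rfl⟩ := List.exists_cons_of_ne_nil hne
  have hrot : (v :: t).rotate 1 = t ++ [v] := by
    rw [List.rotate_cons_succ, List.rotate_zero]
  have hzip : (v :: (t ++ [v])).zip (t ++ [v]) = (v :: t).zip ((v :: t).rotate 1) := by
    rw [hrot, show (v :: (t ++ [v])) = (v :: t) ++ [v] from rfl,
      zip_append_left (v :: t) [v] (t ++ [v]) (by simp)]
  have hchain : List.Chain G.Adj v (t ++ [v]) := by
    apply chain_of_zip
    intro p hp
    exact hadj p (by rwa [← hzip])
  refine ⟨v, mkWalk v t v hchain, ?_, ?_, ?_, ?_⟩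
  · have hsup := mkWalk_support v t v hchain (G := G)
    have hedges : (mkWalk v t v hchain : G.Walk v v).edges = circuitEdgeList (v :: t) := by
      rw [← walk_zip_edges, hsup]
      simp only [List.tail_cons]
      rw [hzip, circuitEdgeList]
    have hlen : (mkWalk v t v hchain : G.Walk v v).length = t.length + 1 := by
      have := (mkWalk v t v hchain : G.Walk v v).length_support
      rw [hsup] at this
      simp at this
      omega
    refine ⟨⟨⟨?_⟩, ?_⟩, ?_⟩
    · rw [hedges]; exact hed
    · intro h
      rw [h] at hlen
      simp at hlen
    · rw [hsup]
      simp only [List.tail_cons]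
      simp only [List.nodup_cons] at hnd
      simp [List.nodup_append, hnd.2, hnd.1]
      exact fun a ha h => hnd.1 (h ▸ ha)
  · have := (mkWalk v t v hchain : G.Walk v v).length_support
    rw [mkWalk_support] at this
    simp at this
    simp [this]
  · rw [← walk_zip_edges, mkWalk_support]
    simp only [List.tail_cons]
    rw [hzip, circuitEdgeList]
  · intro x
    rw [mkWalk_support]
    simp
    tauto

end Stmt13c

namespace Stmt13d
open Stmt13 Stmt13b Stmt13c

variable {V : Type*} [DecidableEq V] {G : SimpleGraph V}

lemma end_mem_tail {u : V} (W : G.Walk u u) (hW : W ≠ Walk.nil) : u ∈ W.support.tail := by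
  have hlen : 1 ≤ W.length := by
    rcases Nat.eq_zero_or_pos W.length with h | h
    · exact absurd (Walk.length_eq_zero_iff.mp h).eq_nil hW
    · exact h
  have h3 : W.support.dropLast ++ [u] = W.support := by
    have := List.dropLast_append_getLast (l := W.support) W.support_ne_nil
    rwa [W.getLast_support] at this
  have hne : W.support.dropLast ≠ [] := by
    intro h
    rw [h] at h3
    have := W.length_support
    rw [← h3] at this
    simp only [List.nil_append, List.length_cons, List.length_nil] at this
    omega
  obtain ⟨a, l'', hl⟩ := List.exists_cons_of_ne_nil hne
  have : W.support.tail = l'' ++ [u] := by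
    have h4 : W.support = a :: (l'' ++ [u]) := by rw [← h3, hl]; simp
    rw [h4, List.tail_cons]
  rw [this]
  simp

lemma rotate_ne_nil {u z : V} (W : G.Walk u u) (hW : W ≠ Walk.nil) (hz : z ∈ W.support) :
    W.rotate z hz ≠ Walk.nil := by
  intro h
  have h1 : (W.rotate z hz).edges.length = W.edges.length := (W.rotate_edges z hz).perm.length_eq
  rw [h] at h1
  simp [Walk.length_edges] at h1
  have : 1 ≤ W.length := by
    rcases Nat.eq_zero_or_pos W.length with h' | h'
    · exact absurd (Walk.length_eq_zero_iff.mp h').eq_nil hW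
    · exact h'
  omega

lemma length_rotate {u z : V} (W : G.Walk u u) (hz : z ∈ W.support) :
    (W.rotate z hz).length = W.length := by
  have h1 : (W.rotate z hz).edges.length = W.edges.length := (W.rotate_edges z hz).perm.length_eq
  rwa [Walk.length_edges, Walk.length_edges] at h1

lemma mem_support_rotate {u z x : V} (W : G.Walk u u) (hW : W ≠ Walk.nil) (hz : z ∈ W.support)
    (hx : x ∈ W.support) : x ∈ (W.rotate z hz).support := by
  have hperm := W.support_rotate z hz
  rw [Walk.mem_support_iff] at hx
  rcases hx with rfl | hx
  · rw [Walk.mem_support_iff]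
    right
    exact hperm.perm.mem_iff.mpr (end_mem_tail W hW)
  · rw [Walk.mem_support_iff]
    right
    exact hperm.perm.mem_iff.mpr hx

/-- Split a walk at its first edge satisfying `Q`. -/
lemma split_at_first {Q : Sym2 V → Prop} :
    ∀ {a b : V} (w : G.Walk a b), (∃ e ∈ w.edges, Q e) →
    ∃ (c d : V) (w₁ : G.Walk a c) (w₂ : G.Walk d b),
      w.edges = w₁.edges ++ s(c, d) :: w₂.edges ∧ (∀ e ∈ w₁.edges, ¬ Q e) ∧ Q s(c, d) := by
  intro a b w
  induction w with
  | nil => simp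
  | @cons a c' b h w' ih =>
    intro hex
    by_cases hQ : Q s(a, c')
    · exact ⟨a, c', Walk.nil, w', by simp, by simp, hQ⟩
    · have : ∃ e ∈ w'.edges, Q e := by
        obtain ⟨e, he, hQe⟩ := hex
        rw [Walk.edges_cons, List.mem_cons] at he
        rcases he with rfl | he
        · exact absurd hQe hQ
        · exact ⟨e, he, hQe⟩
      obtain ⟨c, d, w₁, w₂, heq, hall, hQcd⟩ := ih this
      exact ⟨c, d, Walk.cons h w₁, w₂, by simp [heq], by
        intro e he
        rw [Walk.edges_cons, List.mem_cons] at he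
        rcases he with rfl | he
        · exact hQ
        · exact hall e he, hQcd⟩

end Stmt13d

namespace Stmt13e
open Stmt13 Stmt13b Stmt13c Stmt13d

variable {V : Type*} [DecidableEq V] {G : SimpleGraph V}

lemma find_offcycle {x : V} (c1 : G.Walk x x) :
    ∀ (n : ℕ) {a b : V} (w : G.Walk a b), w.length ≤ n → w.IsTrail → a ∈ c1.support →
    b ∈ c1.support → (∃ e ∈ w.edges, e ∉ c1.edges) →
    ∃ (u v : V) (p : G.Walk u v), u ∈ c1.support ∧ v ∈ c1.support ∧ p.edges.Nodup ∧
      (∀ e ∈ p.edges, e ∉ c1.edges) ∧ 1 ≤ p.length ∧ (∀ e ∈ p.edges, e ∈ w.edges) := by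
  intro n
  induction n with
  | zero =>
    intro a b w hn _ _ _ hex
    obtain ⟨e, he, _⟩ := hex
    have : w.edges.length = 0 := by rw [Walk.length_edges]; omega
    rw [List.length_eq_zero_iff] at this
    rw [this] at he
    simp at he
  | succ n ih =>
    intro a b w hn htrail ha hb hex
    cases w with
    | nil =>
      obtain ⟨e, he, _⟩ := hex
      simp at he
    | @cons a c b h w' =>
      by_cases hfirst : s(a, c) ∈ c1.edges
      · have hc : c ∈ c1.support := c1.snd_mem_support_of_mem_edges hfirst
        have htrail' : w'.IsTrail := ((Walk.isTrail_cons h w').mp htrail).1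
        have hex' : ∃ e ∈ w'.edges, e ∉ c1.edges := by
          obtain ⟨e, he, hQe⟩ := hex
          rw [Walk.edges_cons, List.mem_cons] at he
          rcases he with rfl | he
          · exact absurd hfirst hQe
          · exact ⟨e, he, hQe⟩
        have hn' : w'.length ≤ n := by
          rw [Walk.length_cons] at hn; omega
        obtain ⟨u, v, p, h1, h2, h3, h4, h5, h6⟩ := ih w' hn' htrail' hc hb hex'
        exact ⟨u, v, p, h1, h2, h3, h4, h5, fun e he => by
          rw [Walk.edges_cons]; exact List.mem_cons_of_mem _ (h6 e he)⟩
      · by_cases hC : ∃ e ∈ (Walk.cons h w').edges, e ∈ c1.edges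
        · obtain ⟨c', d', w₁, w₂, heq, hall, hQ⟩ := split_at_first (Q := (· ∈ c1.edges))
            (Walk.cons h w') hC
          have hw1ne : w₁.edges ≠ [] := by
            intro hnil
            rw [hnil, List.nil_append, Walk.edges_cons] at heq
            have : s(a, c) = s(c', d') := by
              have := heq
              rw [List.cons.injEq] at this
              exact this.1
            exact hfirst (this ▸ hQ)
          refine ⟨a, c', w₁, ha, c1.fst_mem_support_of_mem_edges hQ, ?_, hall, ?_, ?_⟩
          · have : w₁.edges.Sublist (Walk.cons h w').edges := by
              rw [heq]; exact List.sublist_append_left _ _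
            exact this.nodup htrail.edges_nodup
          · have : 1 ≤ w₁.edges.length := by
              cases hh : w₁.edges with
              | nil => exact absurd hh hw1ne
              | cons _ _ => simp
            rwa [Walk.length_edges] at this
          · intro e he
            rw [heq]
            exact List.mem_append_left _ he
        · push_neg at hC
          refine ⟨a, b, Walk.cons h w', ha, hb, htrail.edges_nodup, hC, ?_, fun e he => he⟩
          rw [Walk.length_cons]; omega

lemma main_even_circuit {x y z : V} (c1 : G.Walk x x) (c2 : G.Walk y y)
    (h1 : c1.IsCycle) (h2 : c2.IsCycle) (hodd : Odd c1.length)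
    (hz1 : z ∈ c1.support) (hz2 : z ∈ c2.support)
    (hne : ∃ e ∈ c2.edges, e ∉ c1.edges) :
    ∃ (u : V) (W : G.Walk u u), W.IsCircuit ∧ Even W.length ∧
      W.length ≤ c1.length + c2.length := by
  have c1nn : c1 ≠ Walk.nil := by
    intro hc
    have := h1.three_le_length
    rw [hc] at this
    simp at this
  set c2' := c2.rotate z hz2 with hc2'
  have trail2 : c2'.IsTrail := h2.isCircuit.isTrail.rotate hz2
  have hne' : ∃ e ∈ c2'.edges, e ∉ c1.edges := by
    obtain ⟨e, he, h'⟩ := hne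
    exact ⟨e, (c2.rotate_edges z hz2).perm.mem_iff.mpr he, h'⟩
  obtain ⟨u, v, p, hu, hv, hnd, hnotin, hlen1, hsub⟩ :=
    find_offcycle c1 c2'.length c2' le_rfl trail2 hz1 hz1 hne'
  have hplen : p.length ≤ c2.length := by
    have h1' : p.edges.Subperm c2'.edges := hnd.subperm hsub
    have := h1'.length_le
    rw [Walk.length_edges, Walk.length_edges] at this
    rwa [hc2', length_rotate] at this
  have hc1edges : ∀ e, e ∈ (c1.rotate u hu).edges ↔ e ∈ c1.edges :=
    fun e => (c1.rotate_edges u hu).perm.mem_iff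
  by_cases huv : u = v
  · subst huv
    rcases Nat.even_or_odd p.length with hpe | hpo
    · refine ⟨u, p, ⟨⟨hnd⟩, ?_⟩, hpe, le_trans hplen (Nat.le_add_left _ _)⟩
      intro hnil
      rw [hnil] at hlen1
      simp at hlen1
    · refine ⟨u, (c1.rotate u hu).append p, ⟨⟨?_⟩, ?_⟩, ?_, ?_⟩
      · rw [Walk.edges_append]
        refine ((h1.rotate hu).isCircuit.isTrail.edges_nodup).append hnd ?_
        intro e he hep
        exact hnotin e hep ((hc1edges e).mp he)
      · intro hnil
        have h0 := congrArg Walk.length hnil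
        rw [Walk.length_append, length_rotate] at h0
        simp only [Walk.length_nil] at h0
        omega
      · rw [Walk.length_append, length_rotate]
        exact hodd.add_odd hpo
      · rw [Walk.length_append, length_rotate]
        omega
  · have hv' : v ∈ (c1.rotate u hu).support := mem_support_rotate c1 c1nn hu hv
    set c1' := c1.rotate u hu with hc1'
    set q1 := c1'.takeUntil v hv' with hq1
    set q2 := c1'.dropUntil v hv' with hq2
    have hspec : q1.append q2 = c1' := c1'.take_spec hv'
    have hlen12 : q1.length + q2.length = c1.length := by
      have := congrArg Walk.length hspec
      rw [Walk.length_append] at this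
      rw [this, hc1', length_rotate]
    have trail1' : c1'.IsTrail := h1.isCircuit.isTrail.rotate hu
    have hq1t : q1.IsTrail := trail1'.takeUntil hv'
    have hq2t : q2.IsTrail := trail1'.dropUntil hv'
    have hq1sub : ∀ e ∈ q1.edges, e ∈ c1.edges := fun e he =>
      (hc1edges e).mp (c1'.edges_takeUntil_subset hv' he)
    have hq2sub : ∀ e ∈ q2.edges, e ∈ c1.edges := fun e he =>
      (hc1edges e).mp (c1'.edges_dropUntil_subset hv' he)
    rcases Nat.even_or_odd (q1.length + p.length) with hpar | hpar
    · refine ⟨u, q1.append p.reverse, ⟨⟨?_⟩, ?_⟩, ?_, ?_⟩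
      · rw [Walk.edges_append, Walk.edges_reverse]
        refine hq1t.edges_nodup.append (List.nodup_reverse.mpr hnd) ?_
        intro e he hep
        rw [List.mem_reverse] at hep
        exact hnotin e hep (hq1sub e he)
      · intro hnil
        have := congrArg Walk.length hnil
        rw [Walk.length_append, Walk.length_reverse] at this
        simp only [Walk.length_nil] at this
        omega
      · rwa [Walk.length_append, Walk.length_reverse]
      · rw [Walk.length_append, Walk.length_reverse]
        omega
    · have hpar2 : Even (q2.length + p.length) := by
        have ho : Odd (q1.length + q2.length) := hlen12 ▸ hodd
        rw [Nat.odd_iff] at hpar ho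
        rw [Nat.even_iff]
        omega
      refine ⟨v, q2.append p, ⟨⟨?_⟩, ?_⟩, ?_, ?_⟩
      · rw [Walk.edges_append]
        refine hq2t.edges_nodup.append hnd ?_
        intro e he hep
        exact hnotin e hep (hq2sub e he)
      · intro hnil
        have := congrArg Walk.length hnil
        rw [Walk.length_append] at this
        simp only [Walk.length_nil] at this
        omega
      · rwa [Walk.length_append]
      · rw [Walk.length_append]
        omega

end Stmt13e

end Helpers

section App

open SimpleGraph Stmt13 Stmt13b Stmt13c Stmt13d Stmt13e

lemma color_walk {V : Type*} {G : SimpleGraph V} (f : V → Bool) {a b : V} (w : G.Walk a b)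
    (h : ∀ d ∈ w.darts, f d.fst ≠ f d.snd) : (f a = f b) ↔ Even w.length := by
  induction w with
  | nil => simp
  | @cons a c b hadj w' ih =>
    have h1 : f a ≠ f c :=
      h ⟨(a, c), hadj⟩ (by rw [Walk.darts_cons]; exact List.mem_cons_self)
    have h2 := ih (fun d hd => h d (by rw [Walk.darts_cons]; exact List.mem_cons_of_mem _ hd))
    rw [Walk.length_cons, Nat.even_add_one]
    constructor
    · intro hab hev
      exact h1 (hab.trans (h2.mpr hev).symm)
    · intro hnev
      have : ¬ (f c = f b) := fun hcb => hnev (h2.mp hcb)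
      cases hfa : f a <;> cases hfb : f b <;> cases hfc : f c <;> simp_all

lemma odd_closed_mono {V : Type*} {G : SimpleGraph V} (f : V → Bool) {u : V} (w : G.Walk u u)
    (hodd : Odd w.length) : ∃ d ∈ w.darts, f d.fst = f d.snd := by
  by_contra hc
  push_neg at hc
  exact (Nat.not_even_iff_odd.mpr hodd) ((color_walk f w hc).mp rfl)

lemma one_le_sqrt {N : ℕ} (hN : 1 ≤ N) : (1:ℝ) ≤ (N:ℝ) ^ ((1:ℝ)/2) :=
  calc (1:ℝ) = (1:ℝ) ^ ((1:ℝ)/2) := (Real.one_rpow _).symm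
  _ ≤ (N:ℝ) ^ ((1:ℝ)/2) :=
      Real.rpow_le_rpow zero_le_one (by exact_mod_cast hN) (by norm_num)

lemma mono_edge {N : ℕ} {A : Finset ℕ} (hA : ↑A ⊆ Set.Icc 1 N) {x y : ℕ}
    (h : (pfGraph N A).Adj x y)
    (hxy : ((x:ℝ) ≤ (N:ℝ)^((1:ℝ)/2)) ↔ ((y:ℝ) ≤ (N:ℝ)^((1:ℝ)/2))) :
    (x = 1 ∨ x ∈ Pmed N) ∧ (y = 1 ∨ y ∈ Pmed N) := by
  obtain ⟨hne, hcase⟩ := (show _ ∧ _ from h)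
  by_cases hx : (x:ℝ) ≤ (N:ℝ)^((1:ℝ)/2)
  · have hy := hxy.mp hx
    rcases hcase with ⟨rfl, hy', _⟩ | ⟨rfl, hx', _⟩ | ⟨hx', hy', _⟩
    · exact ⟨Or.inl rfl, Or.inr ⟨hy'.1, hy'.2.1, hy⟩⟩
    · exact ⟨Or.inr ⟨hx'.1, hx'.2.1, hx⟩, Or.inl rfl⟩
    · exact ⟨Or.inr ⟨hx'.1, hx'.2.1, hx⟩, Or.inr ⟨hy'.1, hy'.2.1, hy⟩⟩
  · exfalso
    have hy : ¬ (y:ℝ) ≤ (N:ℝ)^((1:ℝ)/2) := fun hy => hx (hxy.mpr hy)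
    rcases hcase with ⟨rfl, hy', _⟩ | ⟨rfl, hx', _⟩ | ⟨hx', hy', a, ha, hdx, hdy⟩
    · have h1N : 1 ≤ N := le_trans (le_trans one_le_two hy'.1.two_le) hy'.2.2
      exact hx (by simpa using one_le_sqrt h1N)
    · have h1N : 1 ≤ N := le_trans (le_trans one_le_two hx'.1.two_le) hx'.2.2
      exact hy (by simpa using one_le_sqrt h1N)
    · have hxN : 0 < N := lt_of_lt_of_le hx'.1.pos hx'.2.2
      have hdvd : x * y ∣ a :=
        ((Nat.coprime_primes hx'.1 hy'.1).mpr hne).mul_dvd_of_dvd_of_dvd hdx hdy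
      have haN : a ∈ Set.Icc 1 N := hA ha
      have hle : x * y ≤ N :=
        le_trans (Nat.le_of_dvd (lt_of_lt_of_le one_pos haN.1) hdvd) haN.2
      push_neg at hx hy
      have h0 : (0:ℝ) ≤ (N:ℝ)^((1:ℝ)/2) := Real.rpow_nonneg (Nat.cast_nonneg N) _
      have hNN : (N:ℝ) = (N:ℝ)^((1:ℝ)/2) * (N:ℝ)^((1:ℝ)/2) := by
        rw [← Real.rpow_add (by exact_mod_cast hxN)]
        norm_num
      have hmul : (N:ℝ) < (x:ℝ) * (y:ℝ) := by
        rw [hNN]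
        exact mul_lt_mul'' hx hy h0 h0
      have hcast : ((x*y : ℕ):ℝ) ≤ (N:ℝ) := by exact_mod_cast hle
      push_cast at hcast
      linarith

variable {N : ℕ} {A : Finset ℕ}

/-- The set of edge sets of short cycles. -/
def Scyc (N : ℕ) (A : Finset ℕ) : Set (Set (Sym2 ℕ)) :=
  {E | ∃ k : ℕ, (k:ℝ) ≤ (N:ℝ) ^ ((1:ℝ)/12) ∧ IsCycle (pfGraph N A) k E}

lemma apply_noeven
    (hnoeven : ∀ k : ℕ, ∀ E : Set (Sym2 ℕ), Even k → (k : ℝ) ≤ 2 * (N : ℝ) ^ ((1 : ℝ) / 12) →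
      ¬ IsCircuit (pfGraph N A) k E)
    {u : ℕ} (W : (pfGraph N A).Walk u u) (hW : W.IsCircuit) (heven : Even W.length)
    (hlen : (W.length : ℝ) ≤ 2 * (N:ℝ) ^ ((1:ℝ)/12)) : False :=
  hnoeven W.length _ heven hlen (isCircuit_of_walk W hW)

lemma cycle_walk
    (hnoeven : ∀ k : ℕ, ∀ E : Set (Sym2 ℕ), Even k → (k : ℝ) ≤ 2 * (N : ℝ) ^ ((1 : ℝ) / 12) →
      ¬ IsCircuit (pfGraph N A) k E)
    {E : Set (Sym2 ℕ)} (hE : E ∈ Scyc N A) :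
    ∃ (v : ℕ) (W : (pfGraph N A).Walk v v), W.IsCycle ∧ Odd W.length ∧
      ((W.length : ℝ)) ≤ (N:ℝ) ^ ((1:ℝ)/12) ∧ E = {e | e ∈ W.edges} ∧
      (∀ z, (∃ e ∈ E, z ∈ e) → z ∈ W.support) := by
  obtain ⟨k, hk, l, hlen, hlne, hlnd, hladj, hednd, hEeq⟩ := hE
  have hodd : Odd k := by
    rcases Nat.even_or_odd k with he | ho
    · exfalso
      refine hnoeven k E he ?_ ⟨l, hlen, hlne, hladj, hednd, hEeq⟩
      have h0 : (0:ℝ) ≤ (N:ℝ) ^ ((1:ℝ)/12) := Real.rpow_nonneg (Nat.cast_nonneg N) _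
      linarith
    · exact ho
  obtain ⟨v, W, hWc, hWlen, hWed, hWsup⟩ := walk_of_list hlne hladj hlnd hednd
  refine ⟨v, W, hWc, ?_, ?_, ?_, ?_⟩
  · rw [hWlen, hlen]; exact hodd
  · rw [hWlen, hlen]; exact hk
  · rw [hEeq, hWed]
  · intro z hz
    obtain ⟨e, he, hze⟩ := hz
    rw [hEeq] at he
    rw [← hWed] at he
    revert hze
    induction e using Sym2.ind with
    | _ p q =>
      intro hze
      rw [Sym2.mem_iff] at hze
      rcases hze with rfl | rfl
      · exact W.fst_mem_support_of_mem_edges he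
      · exact W.snd_mem_support_of_mem_edges he

lemma cycles_disjoint
    (hnoeven : ∀ k : ℕ, ∀ E : Set (Sym2 ℕ), Even k → (k : ℝ) ≤ 2 * (N : ℝ) ^ ((1 : ℝ) / 12) →
      ¬ IsCircuit (pfGraph N A) k E)
    {E F : Set (Sym2 ℕ)} (hE : E ∈ Scyc N A) (hF : F ∈ Scyc N A) (hEF : E ≠ F) :
    ¬ ∃ z, (∃ e ∈ E, z ∈ e) ∧ (∃ e ∈ F, z ∈ e) := by
  rintro ⟨z, hzE, hzF⟩
  obtain ⟨v1, W1, hW1c, hW1odd, hW1len, hW1eq, hW1sup⟩ := cycle_walk hnoeven hE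
  obtain ⟨v2, W2, hW2c, hW2odd, hW2len, hW2eq, hW2sup⟩ := cycle_walk hnoeven hF
  have hz1 : z ∈ W1.support := hW1sup z hzE
  have hz2 : z ∈ W2.support := hW2sup z hzF
  have hkey : ∃ e, (e ∈ W2.edges ∧ e ∉ W1.edges) ∨ (e ∈ W1.edges ∧ e ∉ W2.edges) := by
    by_contra hc
    push_neg at hc
    apply hEF
    rw [hW1eq, hW2eq]
    ext e
    exact ⟨fun he => (hc e).2 he, fun he => (hc e).1 he⟩
  obtain ⟨e, he⟩ := hkey
  rcases he with ⟨he2, hne1⟩ | ⟨he1, hne2⟩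
  · obtain ⟨u, W, hWcirc, hWeven, hWle⟩ :=
      main_even_circuit W1 W2 hW1c hW2c hW1odd hz1 hz2 ⟨e, he2, hne1⟩
    refine apply_noeven hnoeven W hWcirc hWeven ?_
    have : (W.length : ℝ) ≤ (W1.length : ℝ) + (W2.length : ℝ) := by exact_mod_cast hWle
    linarith
  · obtain ⟨u, W, hWcirc, hWeven, hWle⟩ :=
      main_even_circuit W2 W1 hW2c hW1c hW2odd hz2 hz1 ⟨e, he1, hne2⟩
    refine apply_noeven hnoeven W hWcirc hWeven ?_
    have : (W.length : ℝ) ≤ (W2.length : ℝ) + (W1.length : ℝ) := by exact_mod_cast hWle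
    linarith

lemma cycle_good_edge (hA : ↑A ⊆ Set.Icc 1 N)
    (hnoeven : ∀ k : ℕ, ∀ E : Set (Sym2 ℕ), Even k → (k : ℝ) ≤ 2 * (N : ℝ) ^ ((1 : ℝ) / 12) →
      ¬ IsCircuit (pfGraph N A) k E)
    (hnoodd : ∀ k : ℕ, ∀ E : Set (Sym2 ℕ), Odd k → (k : ℝ) ≤ (N : ℝ) ^ ((1 : ℝ) / 12) →
      IsCycle (pfGraph N A) k E → ¬ ∃ p ∈ Psq N A, ∃ e ∈ E, p ∈ e)
    {E : Set (Sym2 ℕ)} (hE : E ∈ Scyc N A) :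
    ∃ e, e ∈ E ∧ e ∈ (pfGraph N A).edgeSet ∧ ∃ a b : ℕ, e = s(a,b) ∧ a ≠ b ∧
      a ∈ insert 1 (Pmed N \ Psq N A) ∧ b ∈ insert 1 (Pmed N \ Psq N A) := by
  obtain ⟨k, hk, hcyc⟩ := hE
  have hodd : Odd k := by
    rcases Nat.even_or_odd k with he | ho
    · exfalso
      obtain ⟨l, h1, h2, _, h4, h5, h6⟩ := hcyc
      refine hnoeven k E he ?_ ⟨l, h1, h2, h4, h5, h6⟩
      have h0 : (0:ℝ) ≤ (N:ℝ) ^ ((1:ℝ)/12) := Real.rpow_nonneg (Nat.cast_nonneg N) _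
      linarith
    · exact ho
  have hpsq := hnoodd k E hodd hk hcyc
  obtain ⟨v, W, hWc, hWodd, hWlen, hWeq, hWsup⟩ := cycle_walk hnoeven ⟨k, hk, hcyc⟩
  obtain ⟨d, hd, hdf⟩ :=
    odd_closed_mono (V := ℕ) (G := pfGraph N A) (u := v) (w := W)
      (fun x : ℕ => decide ((x:ℝ) ≤ (N:ℝ) ^ ((1:ℝ)/2))) hWodd
  have hadj := d.adj
  have hiff : ((d.fst : ℝ) ≤ (N:ℝ)^((1:ℝ)/2)) ↔ ((d.snd : ℝ) ≤ (N:ℝ)^((1:ℝ)/2)) := by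
    rwa [decide_eq_decide] at hdf
  have hmem := mono_edge hA hadj hiff
  have hedge : s(d.fst, d.snd) ∈ W.edges := by
    have : d.edge ∈ W.edges := List.mem_map_of_mem (f := Dart.edge) hd
    rwa [show d.edge = s(d.fst, d.snd) from rfl] at this
  have heE : s(d.fst, d.snd) ∈ E := by rw [hWeq]; exact hedge
  refine ⟨s(d.fst, d.snd), heE, (pfGraph N A).mem_edgeSet.mpr hadj, d.fst, d.snd, rfl, hadj.ne, ?_, ?_⟩
  · rcases hmem.1 with h1 | h1
    · exact Set.mem_insert_iff.mpr (Or.inl h1)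
    · refine Set.mem_insert_iff.mpr (Or.inr ⟨h1, ?_⟩)
      intro hsq
      exact hpsq ⟨d.fst, hsq, s(d.fst, d.snd), heE, Sym2.mem_mk_left _ _⟩
  · rcases hmem.2 with h1 | h1
    · exact Set.mem_insert_iff.mpr (Or.inl h1)
    · refine Set.mem_insert_iff.mpr (Or.inr ⟨h1, ?_⟩)
      intro hsq
      exact hpsq ⟨d.snd, hsq, s(d.fst, d.snd), heE, Sym2.mem_mk_right _ _⟩

end App

/-- If the prime factorization graph of `A ⊆ [N]` has no even circuit of length at most
`2·N^{1/12}` and no odd cycle of length at most `N^{1/12}` containing a vertex from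
`P_□`, then one can delete at most `(|P_{¬□}| + 1)/2` edges so that no cycle of length at
most `N^{1/12}` remains. -/
theorem stmt13 (N : ℕ) (A : Finset ℕ) (hA : ↑A ⊆ Set.Icc 1 N)
    (hnoeven : ∀ k : ℕ, ∀ E : Set (Sym2 ℕ), Even k → (k : ℝ) ≤ 2 * (N : ℝ) ^ ((1 : ℝ) / 12) →
      ¬ IsCircuit (pfGraph N A) k E)
    (hnoodd : ∀ k : ℕ, ∀ E : Set (Sym2 ℕ), Odd k → (k : ℝ) ≤ (N : ℝ) ^ ((1 : ℝ) / 12) →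
      IsCycle (pfGraph N A) k E → ¬ ∃ p ∈ Psq N A, ∃ e ∈ E, p ∈ e) :
    ∃ E' : Set (Sym2 ℕ), E' ⊆ (pfGraph N A).edgeSet ∧ E'.Finite ∧
      (E'.ncard : ℝ) ≤ (((Pmed N \ Psq N A).ncard : ℝ) + 1) / 2 ∧
      ∀ k : ℕ, ∀ E'' : Set (Sym2 ℕ), (k : ℝ) ≤ (N : ℝ) ^ ((1 : ℝ) / 12) →
        ¬ IsCycle ((pfGraph N A).deleteEdges E') k E'' := by
  classical
  set G := pfGraph N A with hG
  set T : Set ℕ := insert 1 (Pmed N \ Psq N A) with hT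
  have hPmedfin : (Pmed N).Finite := by
    apply (Set.finite_Iic N).subset
    intro p hp
    obtain ⟨hp1, _, hp3⟩ := hp
    simp only [Set.mem_Iic]
    by_cases hN : 1 ≤ N
    · have : (N:ℝ) ^ ((1:ℝ)/2) ≤ (N:ℝ) ^ ((1:ℝ)) := by
        apply Real.rpow_le_rpow_of_exponent_le (by exact_mod_cast hN) (by norm_num)
      rw [Real.rpow_one] at this
      exact_mod_cast le_trans hp3 this
    · exfalso
      have hN0 : N = 0 := by omega
      rw [hN0] at hp3
      simp only [Nat.cast_zero] at hp3
      rw [Real.zero_rpow (by norm_num)] at hp3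
      have := hp1.two_le
      have : (2:ℝ) ≤ (p:ℝ) := by exact_mod_cast this
      linarith
  have hTfin : T.Finite := ((hPmedfin.subset Set.diff_subset).insert 1)
  have hsel : ∀ E ∈ Scyc N A, ∃ e, e ∈ E ∧ e ∈ G.edgeSet ∧ ∃ a b : ℕ, e = s(a,b) ∧ a ≠ b ∧
      a ∈ T ∧ b ∈ T := fun E hE => cycle_good_edge hA hnoeven hnoodd hE
  choose! f hf using hsel
  set E' : Set (Sym2 ℕ) := f '' Scyc N A with hE'
  have hE'fin : E'.Finite := by
    apply ((hTfin.prod hTfin).image (fun p : ℕ × ℕ => s(p.1, p.2))).subset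
    rintro e ⟨E, hEs, rfl⟩
    obtain ⟨-, -, a, b, hab, -, haT, hbT⟩ := hf E hEs
    exact ⟨(a, b), Set.mk_mem_prod haT hbT, hab.symm⟩
  have hE'edge : E' ⊆ G.edgeSet := by
    rintro e ⟨E, hEs, rfl⟩
    exact (hf E hEs).2.1
  -- counting
  set s0 : Finset (Sym2 ℕ) := hE'fin.toFinset with hs0
  set tF : Finset ℕ := hTfin.toFinset with htF
  have hcount : 2 * s0.card ≤ tF.card := by
    set g : Sym2 ℕ → Finset ℕ := fun e => tF.filter (· ∈ e) with hg
    have hgsub : ∀ e ∈ s0, g e ⊆ tF := fun e _ => Finset.filter_subset _ _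
    have hgcard : ∀ e ∈ s0, 2 ≤ (g e).card := by
      intro e he
      rw [hs0, Set.Finite.mem_toFinset] at he
      obtain ⟨E, hEs, rfl⟩ := he
      obtain ⟨-, -, a, b, hab, hne, haT, hbT⟩ := hf E hEs
      have hsubset : ({a, b} : Finset ℕ) ⊆ g (f E) := by
        intro x hx
        rw [Finset.mem_insert, Finset.mem_singleton] at hx
        rw [hg, Finset.mem_filter]
        rcases hx with rfl | rfl
        · exact ⟨(Set.Finite.mem_toFinset _).mpr haT, by rw [hab]; exact Sym2.mem_mk_left _ _⟩
        · exact ⟨(Set.Finite.mem_toFinset _).mpr hbT, by rw [hab]; exact Sym2.mem_mk_right _ _⟩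
      calc 2 = ({a, b} : Finset ℕ).card := (Finset.card_pair hne).symm
      _ ≤ (g (f E)).card := Finset.card_le_card hsubset
    have hdisj : ∀ e ∈ s0, ∀ e' ∈ s0, e ≠ e' → Disjoint (g e) (g e') := by
      intro e he e' he' hnee
      rw [hs0, Set.Finite.mem_toFinset] at he he'
      obtain ⟨E1, hE1, rfl⟩ := he
      obtain ⟨E2, hE2, rfl⟩ := he'
      have hE12 : E1 ≠ E2 := fun h => hnee (by rw [h])
      rw [Finset.disjoint_left]
      intro z hz1 hz2
      rw [hg, Finset.mem_filter] at hz1 hz2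
      exact cycles_disjoint hnoeven hE1 hE2 hE12
        ⟨z, ⟨f E1, (hf E1 hE1).1, hz1.2⟩, ⟨f E2, (hf E2 hE2).1, hz2.2⟩⟩
    calc 2 * s0.card = s0.card • 2 := by rw [smul_eq_mul]; ring
    _ ≤ ∑ e ∈ s0, (g e).card := Finset.card_nsmul_le_sum s0 _ 2 hgcard
    _ = (s0.biUnion g).card := (Finset.card_biUnion hdisj).symm
    _ ≤ tF.card := Finset.card_le_card (by
        intro x hx
        rw [Finset.mem_biUnion] at hx
        obtain ⟨e, he, hxe⟩ := hx
        exact hgsub e he hxe)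
  refine ⟨E', hE'edge, hE'fin, ?_, ?_⟩
  · have h1 : E'.ncard = s0.card := Set.ncard_eq_toFinset_card E' hE'fin
    have h2 : T.ncard = tF.card := Set.ncard_eq_toFinset_card T hTfin
    have h3 : T.ncard ≤ (Pmed N \ Psq N A).ncard + 1 := Set.ncard_insert_le _ _
    have h4 : 2 * E'.ncard ≤ (Pmed N \ Psq N A).ncard + 1 := by omega
    rw [le_div_iff₀ (by norm_num : (0:ℝ) < 2)]
    have := (Nat.cast_le (α := ℝ)).mpr h4
    push_cast at this ⊢
    linarith
  · intro k E'' hk hcyc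
    obtain ⟨l, hlen, hlne, hlnd, hladj, hednd, hEeq⟩ := hcyc
    have hadjG : ∀ p ∈ l.zip (l.rotate 1), G.Adj p.1 p.2 := by
      intro p hp
      exact (SimpleGraph.deleteEdges_adj.mp (hladj p hp)).1
    have hES : E'' ∈ Scyc N A := ⟨k, hk, l, hlen, hlne, hlnd, hadjG, hednd, hEeq⟩
    obtain ⟨e0, he0E, he0'⟩ : ∃ e0, e0 ∈ E'' ∧ e0 ∈ E' :=
      ⟨f E'', (hf E'' hES).1, Set.mem_image_of_mem f hES⟩
    rw [hEeq] at he0E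
    simp only [Set.mem_setOf_eq, circuitEdgeList, List.mem_map] at he0E
    obtain ⟨p, hp, hpe⟩ := he0E
    have := (SimpleGraph.deleteEdges_adj.mp (hladj p hp)).2
    rw [hpe] at this
    exact this he0'
end

section
/- Let N ∈ ℕ with N ≥ 4, and let T be any tree whose vertex set is the set of all primes ≤ N^{1/2}. Then the set A = {p : p prime, N^{1/2} < p ≤ N} ∪ {p² : p prime, p ≤ N^{1/2}} ∪ {p·q : {p,q} an edge of T} is a subset of [N] with distinct subset products, and |A| = π(N) + π(N^{1/2}) − 1. -/
open Finset

noncomputable def primePi (x : ℝ) : ℕ := {p : ℕ | p.Prime ∧ (p : ℝ) ≤ x}.ncard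


private lemma fac_prime_apply {p w : ℕ} (hp : p.Prime) :
    p.factorization w = if w = p then 1 else 0 := by
  rw [hp.factorization]
  simp [Finsupp.single_apply, eq_comm]

private lemma fac_sq_apply {p w : ℕ} (hp : p.Prime) :
    (p ^ 2).factorization w = if w = p then 2 else 0 := by
  rw [hp.factorization_pow]
  simp [Finsupp.single_apply, eq_comm]

private lemma fac_mul_apply {p q w : ℕ} (hp : p.Prime) (hq : q.Prime) :
    (p * q).factorization w = (if w = p then 1 else 0) + (if w = q then 1 else 0) := by
  rw [Nat.factorization_mul hp.pos.ne' hq.pos.ne', Finsupp.add_apply,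
    fac_prime_apply hp, fac_prime_apply hq]

private lemma prime_mul_eq {p q p' q' : ℕ} (hp : p.Prime) (hq : q.Prime)
    (hp' : p'.Prime) (hq' : q'.Prime) (h : p * q = p' * q') :
    (p = p' ∧ q = q') ∨ (p = q' ∧ q = p') := by
  have hd : p ∣ p' * q' := h ▸ dvd_mul_right p q
  rcases (Nat.Prime.dvd_mul hp).mp hd with h1 | h1
  · left
    have hpp : p = p' := (Nat.prime_dvd_prime_iff_eq hp hp').mp h1
    subst hpp
    exact ⟨rfl, Nat.eq_of_mul_eq_mul_left hp.pos h⟩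
  · right
    have hpp : p = q' := (Nat.prime_dvd_prime_iff_eq hp hq').mp h1
    subst hpp
    refine ⟨rfl, ?_⟩
    have h' : p * q = p * p' := by rw [h, mul_comm]
    exact Nat.eq_of_mul_eq_mul_left hp.pos h'

private lemma sq_ne_mul {p q r : ℕ} (hp : p.Prime) (hq : q.Prime) (hr : r.Prime)
    (hqr : q ≠ r) : p ^ 2 ≠ q * r := by
  intro h
  rcases prime_mul_eq hp hp hq hr (by rw [← pow_two]; exact h) with ⟨h1, h2⟩ | ⟨h1, h2⟩ <;>
    exact hqr (h1 ▸ h2 ▸ rfl)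

private lemma mul_not_prime {q r : ℕ} (hq : q.Prime) (hr : r.Prime) : ¬ (q * r).Prime := by
  intro h
  rcases Nat.prime_mul_iff.mp h with ⟨_, h1⟩ | ⟨_, h1⟩
  · exact hr.one_lt.ne' h1
  · exact hq.one_lt.ne' h1

private lemma sq_not_prime {q : ℕ} (hq : q.Prime) : ¬ (q ^ 2).Prime := by
  rw [pow_two]; exact mul_not_prime hq hq


private lemma pair_filter_card {V : Type*} [DecidableEq V] (S : Finset V) {a b : V} (hab : a ≠ b) :
    (S.filter (fun w => w ∈ s(a, b))).card
      = (if a ∈ S then 1 else 0) + (if b ∈ S then 1 else 0) := by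
  have h1 : S.filter (fun w => w ∈ s(a, b)) =
      S.filter (fun w => w = a) ∪ S.filter (fun w => w = b) := by
    rw [← Finset.filter_or]
    apply Finset.filter_congr
    intro w _
    simp [Sym2.mem_iff]
  rw [h1, Finset.card_union_of_disjoint, Finset.filter_eq', Finset.filter_eq']
  · split <;> split <;> simp
  · rw [Finset.disjoint_left]
    intro x hx hx'
    simp only [Finset.mem_filter] at hx hx'
    exact hab (hx.2 ▸ hx'.2 ▸ rfl)

private lemma forest_even_degree {V : Type*} [Fintype V] [DecidableEq V] (G : SimpleGraph V)
    (hG : G.IsAcyclic) (D : Finset (Sym2 V)) (hD : ∀ e ∈ D, e ∈ G.edgeSet)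
    (hdeg : ∀ v : V, Even ((D.filter (fun e => v ∈ e)).card)) : D = ∅ := by
  classical
  by_contra hne
  obtain ⟨e₀, he₀⟩ := Finset.nonempty_iff_ne_empty.mpr hne
  induction e₀ using Sym2.ind with
  | _ u v =>
  have huv : G.Adj u v := (G.mem_edgeSet).mp (hD _ he₀)
  have hbr : G.IsBridge s(u, v) := SimpleGraph.isAcyclic_iff_forall_adj_isBridge.mp hG huv
  set G' := G \ SimpleGraph.fromEdgeSet {s(u, v)} with hG'
  have hvnot : ¬ G'.Reachable u v := hbr
  set S : Finset V := Finset.univ.filter (fun w => G'.Reachable u w) with hS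
  have huS : u ∈ S := by simp [hS]
  have hvS : v ∉ S := by simp [hS]; exact hvnot
  -- crossing edges must be s(u,v)
  have cross : ∀ a b : V, G.Adj a b → a ∈ S → b ∉ S → s(a, b) = s(u, v) := by
    intro a b hab ha hb
    by_contra hne'
    have hadj : G'.Adj a b := by
      rw [hG', SimpleGraph.sdiff_adj, SimpleGraph.fromEdgeSet_adj]
      exact ⟨hab, fun h => hne' h.1⟩
    have hra : G'.Reachable u a := by simpa [hS] using ha
    have : G'.Reachable u b := hra.trans hadj.reachable
    exact hb (by simpa [hS] using this)
  -- double counting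
  have hswap : ∑ w ∈ S, (D.filter (fun e => w ∈ e)).card
      = ∑ e ∈ D, (S.filter (fun w => w ∈ e)).card := by
    simp_rw [Finset.card_filter]
    exact Finset.sum_comm
  have heven : Even (∑ e ∈ D, (S.filter (fun w => w ∈ e)).card) := by
    rw [← hswap]
    exact Finset.even_sum _ fun w _ => hdeg w
  have hsplit : ∑ e ∈ D, (S.filter (fun w => w ∈ e)).card
      = (S.filter (fun w => w ∈ s(u, v))).card
        + ∑ e ∈ D.erase s(u, v), (S.filter (fun w => w ∈ e)).card :=
    (Finset.add_sum_erase D _ he₀).symm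
  have huvcard : (S.filter (fun w => w ∈ s(u, v))).card = 1 := by
    rw [pair_filter_card S huv.ne, if_pos huS, if_neg hvS]
  have hrest : Even (∑ e ∈ D.erase s(u, v), (S.filter (fun w => w ∈ e)).card) := by
    apply Finset.even_sum
    intro e he
    have heD : e ∈ D := Finset.mem_of_mem_erase he
    have hene : e ≠ s(u, v) := Finset.ne_of_mem_erase he
    induction e using Sym2.ind with
    | _ a b =>
    have hab : G.Adj a b := (G.mem_edgeSet).mp (hD _ heD)
    rw [pair_filter_card S hab.ne]
    by_cases ha : a ∈ S <;> by_cases hb : b ∈ S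
    · simp [ha, hb]
    · exact absurd (cross a b hab ha hb) hene
    · exact absurd (cross b a hab.symm hb ha) (by rwa [Sym2.eq_swap] at hene)
    · simp [ha, hb]
  rw [hsplit, huvcard] at heven
  rw [Nat.even_add, Nat.even_iff, Nat.even_iff] at heven
  rw [Nat.even_iff] at hrest
  omega

theorem aux18 (N : ℕ) (hN : 4 ≤ N) (r : ℝ) (hr0 : (0:ℝ) ≤ r) (hrr : r * r = N)
    (T : SimpleGraph {p : ℕ // p.Prime ∧ (p : ℝ) ≤ r})
    (hT : T.IsTree) :
    ∀ A : Set ℕ,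
      A = {n : ℕ | (n.Prime ∧ r < (n : ℝ) ∧ n ≤ N) ∨
        (∃ p : ℕ, p.Prime ∧ (p : ℝ) ≤ r ∧ n = p ^ 2) ∨
        (∃ p q : {p : ℕ // p.Prime ∧ (p : ℝ) ≤ r},
          T.Adj p q ∧ n = (p : ℕ) * (q : ℕ))} →
      A ⊆ Set.Icc 1 N ∧ DistinctSubsetProds A ∧
        A.ncard + 1 = primePi N + primePi r := by
  classical
  intro A hA
  have hN0 : (0 : ℝ) < N := by positivity
  have hN4 : (4 : ℝ) ≤ N := by exact_mod_cast hN
  have hrN : r ≤ N := by nlinarith [sq_nonneg (r - 2)]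
  -- small products are at most N
  have hsmall : ∀ p q : ℕ, (p : ℝ) ≤ r → (q : ℝ) ≤ r → p * q ≤ N := by
    intro p q hp hq
    have : ((p * q : ℕ) : ℝ) ≤ (N : ℝ) := by
      push_cast
      calc (p : ℝ) * q ≤ r * r := by
            apply mul_le_mul hp hq (by positivity) hr0
        _ = N := hrr
    exact_mod_cast this
  -- the vertex type is finite
  haveI : Finite {p : ℕ // p.Prime ∧ (p : ℝ) ≤ r} := by
    have hmem : ∀ p : {p : ℕ // p.Prime ∧ (p : ℝ) ≤ r}, (p : ℕ) ∈ Set.Iic N := by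
      intro p
      have : ((p : ℕ) : ℝ) ≤ (N : ℝ) := le_trans p.2.2 hrN
      exact_mod_cast this
    haveI : Finite ↥(Set.Iic N) := (Set.finite_Iic N).to_subtype
    refine Finite.of_injective (fun p => (⟨(p : ℕ), hmem p⟩ : Set.Iic N)) ?_
    intro a b h
    exact Subtype.ext (congrArg (fun x : Set.Iic N => (x : ℕ)) h)
  haveI : Fintype {p : ℕ // p.Prime ∧ (p : ℝ) ≤ r} := Fintype.ofFinite _
  -- the edge product map
  set g : Sym2 {p : ℕ // p.Prime ∧ (p : ℝ) ≤ r} → ℕ :=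
    Sym2.lift ⟨fun p q => (p : ℕ) * (q : ℕ), fun p q => mul_comm _ _⟩ with hgdef
  have hgmk : ∀ p q : {p : ℕ // p.Prime ∧ (p : ℝ) ≤ r}, g s(p, q) = (p : ℕ) * q :=
    fun p q => rfl
  have hginj : Function.Injective g := by
    intro e e'
    induction e using Sym2.ind with
    | _ p q =>
    induction e' using Sym2.ind with
    | _ p' q' =>
    rw [hgmk, hgmk]
    intro h
    rcases prime_mul_eq p.2.1 q.2.1 p'.2.1 q'.2.1 h with ⟨h1, h2⟩ | ⟨h1, h2⟩
    · rw [Sym2.eq_iff]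
      exact Or.inl ⟨Subtype.ext h1, Subtype.ext h2⟩
    · rw [Sym2.eq_iff]
      exact Or.inr ⟨Subtype.ext h1, Subtype.ext h2⟩
  -- classification of elements of A
  have hclass : ∀ n ∈ A, (n.Prime ∧ r < (n : ℝ) ∧ n ≤ N) ∨
      (∃ p : {p : ℕ // p.Prime ∧ (p : ℝ) ≤ r}, n = (p : ℕ) ^ 2) ∨
      (∃ e ∈ T.edgeSet, n = g e) := by
    intro n hn
    rw [hA] at hn
    simp only [Set.mem_setOf_eq] at hn
    rcases hn with h | h | h
    · exact Or.inl h
    · obtain ⟨p, hp1, hp2, hp3⟩ := h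
      exact Or.inr (Or.inl ⟨⟨p, hp1, hp2⟩, hp3⟩)
    · obtain ⟨p, q, hadj, hn⟩ := h
      exact Or.inr (Or.inr ⟨s(p, q), T.mem_edgeSet.mpr hadj, hn⟩)
  -- elements of A are nonzero
  have hne0 : ∀ n ∈ A, n ≠ 0 := by
    intro n hn
    rcases hclass n hn with ⟨hp, _, _⟩ | ⟨p, rfl⟩ | ⟨e, he, rfl⟩
    · exact hp.pos.ne'
    · exact pow_ne_zero _ p.2.1.pos.ne'
    · induction e using Sym2.ind with
      | _ p q =>
      rw [hgmk]
      exact (Nat.mul_pos p.2.1.pos q.2.1.pos).ne'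
  -- Part 1 : A ⊆ Icc 1 N
  have part1 : A ⊆ Set.Icc 1 N := by
    intro n hn
    rcases hclass n hn with ⟨hp, _, hn2⟩ | ⟨p, rfl⟩ | ⟨e, he, rfl⟩
    · exact ⟨hp.one_lt.le, hn2⟩
    · refine ⟨Nat.one_le_iff_ne_zero.mpr (pow_ne_zero _ p.2.1.pos.ne'), ?_⟩
      rw [pow_two]
      exact hsmall _ _ p.2.2 p.2.2
    · induction e using Sym2.ind with
      | _ p q =>
      rw [hgmk]
      exact ⟨Nat.one_le_iff_ne_zero.mpr (Nat.mul_pos p.2.1.pos q.2.1.pos).ne',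
        hsmall _ _ p.2.2 q.2.2⟩
  -- key formula for large primes
  have keyL : ∀ B : Finset ℕ, ↑B ⊆ A → ∀ w : ℕ, w.Prime → r < (w : ℝ) →
      (∑ b ∈ B, (b.factorization) w) = if w ∈ B then 1 else 0 := by
    intro B hB w hw hrw
    have hzero : ∀ b ∈ B, b ≠ w → b.factorization w = 0 := by
      intro b hb hbw
      rcases hclass b (hB hb) with ⟨hp, _, _⟩ | ⟨p, rfl⟩ | ⟨e, he, rfl⟩
      · rw [fac_prime_apply hp, if_neg (fun h => hbw h.symm)]
      · rw [fac_sq_apply p.2.1, if_neg]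
        rintro rfl
        exact absurd p.2.2 (not_le.mpr hrw)
      · induction e using Sym2.ind with
        | _ p q =>
        rw [hgmk, fac_mul_apply p.2.1 q.2.1, if_neg, if_neg]
        · rintro rfl; exact absurd q.2.2 (not_le.mpr hrw)
        · rintro rfl; exact absurd p.2.2 (not_le.mpr hrw)
    by_cases hwB : w ∈ B
    · rw [if_pos hwB, Finset.sum_eq_single_of_mem w hwB hzero, fac_prime_apply hw, if_pos rfl]
    · rw [if_neg hwB, Finset.sum_eq_zero]
      intro b hb
      exact hzero b hb (fun h => hwB (h ▸ hb))
  -- key formula for small primes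
  have keyS : ∀ B : Finset ℕ, ↑B ⊆ A → ∀ w : {p : ℕ // p.Prime ∧ (p : ℝ) ≤ r},
      (∑ b ∈ B, b.factorization (w : ℕ))
        = (if ((w : ℕ)) ^ 2 ∈ B then 2 else 0)
          + ((T.edgeFinset.filter (fun e => g e ∈ B)).filter (fun e => w ∈ e)).card := by
    intro B hB w
    set Bq : Finset ℕ :=
      B.filter (fun n => ∃ p : {p : ℕ // p.Prime ∧ (p : ℝ) ≤ r}, n = (p : ℕ) ^ 2) with hBq
    set Be : Finset ℕ := B.filter (fun n => ∃ e ∈ T.edgeSet, n = g e) with hBe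
    have hstep1 : ∑ b ∈ B, b.factorization (w : ℕ)
        = ∑ b ∈ B.filter (fun n =>
            (∃ p : {p : ℕ // p.Prime ∧ (p : ℝ) ≤ r}, n = (p : ℕ) ^ 2)
              ∨ (∃ e ∈ T.edgeSet, n = g e)), b.factorization (w : ℕ) := by
      refine (Finset.sum_subset (Finset.filter_subset _ _) ?_).symm
      intro b hb hb'
      have hnp : ¬((∃ p : {p : ℕ // p.Prime ∧ (p : ℝ) ≤ r}, b = (p : ℕ) ^ 2)
          ∨ (∃ e ∈ T.edgeSet, b = g e)) :=
        fun h => hb' (Finset.mem_filter.mpr ⟨hb, h⟩)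
      rcases hclass b (hB hb) with ⟨hp, hrb, _⟩ | hq | he
      · rw [fac_prime_apply hp, if_neg]
        rintro rfl
        exact absurd w.2.2 (not_le.mpr hrb)
      · exact absurd (Or.inl hq) hnp
      · exact absurd (Or.inr he) hnp
    have hdisj : Disjoint Bq Be := by
      rw [Finset.disjoint_left]
      intro n hn1 hn2
      rw [hBq, Finset.mem_filter] at hn1
      rw [hBe, Finset.mem_filter] at hn2
      obtain ⟨-, p, rfl⟩ := hn1
      obtain ⟨-, e, he, heq⟩ := hn2
      induction e using Sym2.ind with
      | _ a b =>
      have hab : a ≠ b := fun h =>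
        T.not_isDiag_of_mem_edgeSet he (by rw [h]; exact Sym2.mk_isDiag_iff.mpr rfl)
      rw [hgmk] at heq
      exact sq_ne_mul p.2.1 a.2.1 b.2.1
        (fun h => hab (Subtype.ext h)) heq
    have hunion : B.filter (fun n =>
        (∃ p : {p : ℕ // p.Prime ∧ (p : ℝ) ≤ r}, n = (p : ℕ) ^ 2)
          ∨ (∃ e ∈ T.edgeSet, n = g e)) = Bq ∪ Be := Finset.filter_or _ _ _
    rw [hstep1, hunion, Finset.sum_union hdisj]
    congr 1
    · -- squares part
      by_cases hsq : ((w : ℕ)) ^ 2 ∈ B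
      · rw [if_pos hsq]
        have hmemq : ((w : ℕ)) ^ 2 ∈ Bq := Finset.mem_filter.mpr ⟨hsq, ⟨w, rfl⟩⟩
        rw [Finset.sum_eq_single_of_mem _ hmemq ?_, fac_sq_apply w.2.1, if_pos rfl]
        intro b hb hne
        obtain ⟨hbB, p, rfl⟩ := Finset.mem_filter.mp hb
        rw [fac_sq_apply p.2.1, if_neg]
        intro h
        exact hne (by rw [← h])
      · rw [if_neg hsq, Finset.sum_eq_zero]
        intro b hb
        obtain ⟨hbB, p, rfl⟩ := Finset.mem_filter.mp hb
        rw [fac_sq_apply p.2.1, if_neg]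
        intro h
        rw [← h] at hbB
        exact hsq hbB
    · -- edges part
      have himg : Be = (T.edgeFinset.filter (fun e => g e ∈ B)).image g := by
        ext n
        rw [hBe, Finset.mem_filter, Finset.mem_image]
        constructor
        · rintro ⟨hnB, e, he, rfl⟩
          exact ⟨e, Finset.mem_filter.mpr ⟨SimpleGraph.mem_edgeFinset.mpr he, hnB⟩, rfl⟩
        · rintro ⟨e, he, rfl⟩
          obtain ⟨he1, he2⟩ := Finset.mem_filter.mp he
          exact ⟨he2, e, SimpleGraph.mem_edgeFinset.mp he1, rfl⟩
      rw [himg, Finset.sum_image (fun e _ e' _ h => hginj h), Finset.card_filter]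
      refine Finset.sum_congr rfl ?_
      intro e he
      have heE : e ∈ T.edgeSet :=
        SimpleGraph.mem_edgeFinset.mp (Finset.mem_filter.mp he).1
      induction e using Sym2.ind with
      | _ p q =>
      have hpq : p ≠ q := fun h =>
        T.not_isDiag_of_mem_edgeSet heE (by rw [h]; exact Sym2.mk_isDiag_iff.mpr rfl)
      rw [hgmk, fac_mul_apply p.2.1 q.2.1]
      by_cases h1 : w = p
      · subst h1
        rw [if_pos rfl, if_neg (fun h => hpq (Subtype.ext h)),
          if_pos (Sym2.mem_mk_left _ _)]
      · by_cases h2 : w = q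
        · subst h2
          rw [if_neg (fun h => h1 (Subtype.ext h)), if_pos rfl,
            if_pos (Sym2.mem_mk_right _ _)]
        · rw [if_neg (fun h => h1 (Subtype.ext h)), if_neg (fun h => h2 (Subtype.ext h)),
            if_neg]
          · intro h
            rcases Sym2.mem_iff.mp h with h | h
            · exact h1 h
            · exact h2 h
  -- equality of factorization sums
  have hfaceq : ∀ B C : Finset ℕ, ↑B ⊆ A → ↑C ⊆ A → ∏ b ∈ B, b = ∏ c ∈ C, c →
      ∀ w : ℕ, ∑ b ∈ B, b.factorization w = ∑ c ∈ C, c.factorization w := by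
    intro B C hB hC hprod w
    have h1 : (∏ b ∈ B, b).factorization = ∑ b ∈ B, (b).factorization :=
      Nat.factorization_prod (fun b hb => hne0 b (hB hb))
    have h2 : (∏ c ∈ C, c).factorization = ∑ c ∈ C, (c).factorization :=
      Nat.factorization_prod (fun c hc => hne0 c (hC hc))
    have h3 : (∑ b ∈ B, (b).factorization) w = (∑ c ∈ C, (c).factorization) w := by
      rw [← h1, ← h2, hprod]
    rwa [Finsupp.finset_sum_apply, Finsupp.finset_sum_apply] at h3
  -- one-sided inclusion given equal data
  have hmain : ∀ B C : Finset ℕ, ↑B ⊆ A → ↑C ⊆ A →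
      (∀ w : ℕ, ∑ b ∈ B, b.factorization w = ∑ c ∈ C, c.factorization w) →
      T.edgeFinset.filter (fun e => g e ∈ B) = T.edgeFinset.filter (fun e => g e ∈ C) →
      ∀ n ∈ B, n ∈ C := by
    intro B C hB hC hfw hES n hn
    rcases hclass n (hB hn) with ⟨hp, hrn, _⟩ | ⟨p, rfl⟩ | ⟨e, he, rfl⟩
    · have h1 := keyL B hB n hp hrn
      have h2 := keyL C hC n hp hrn
      have h3 := hfw n
      rw [h1, h2, if_pos hn] at h3
      by_contra hc
      rw [if_neg hc] at h3
      exact one_ne_zero h3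
    · have h1 := keyS B hB p
      have h2 := keyS C hC p
      have h3 := hfw ((p : ℕ))
      rw [h1, h2, hES, if_pos hn] at h3
      by_contra hc
      rw [if_neg hc] at h3
      omega
    · have h4 : e ∈ T.edgeFinset.filter (fun e => g e ∈ B) :=
        Finset.mem_filter.mpr ⟨SimpleGraph.mem_edgeFinset.mpr he, hn⟩
      rw [hES] at h4
      exact (Finset.mem_filter.mp h4).2
  -- Part 2 : distinct subset products
  have part2 : DistinctSubsetProds A := by
    intro B C hB hC hprod
    have hfw := hfaceq B C hB hC hprod
    -- the selected edge sets coincide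
    have hES : T.edgeFinset.filter (fun e => g e ∈ B)
        = T.edgeFinset.filter (fun e => g e ∈ C) := by
      set EB := T.edgeFinset.filter (fun e => g e ∈ B) with hEB
      set EC := T.edgeFinset.filter (fun e => g e ∈ C) with hEC
      have hpar : ∀ w : {p : ℕ // p.Prime ∧ (p : ℝ) ≤ r},
          (EB.filter (fun e => w ∈ e)).card % 2 = (EC.filter (fun e => w ∈ e)).card % 2 := by
        intro w
        have h1 := keyS B hB w
        have h2 := keyS C hC w
        have h3 := hfw ((w : ℕ))
        rw [h1, h2] at h3
        rw [← hEB, ← hEC] at h3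
        split_ifs at h3 <;> omega
      have hD : (EB \ EC) ∪ (EC \ EB) = ∅ := by
        apply forest_even_degree T hT.IsAcyclic
        · intro e he
          rcases Finset.mem_union.mp he with h | h
          · exact SimpleGraph.mem_edgeFinset.mp
              (Finset.mem_filter.mp (Finset.mem_sdiff.mp h).1).1
          · exact SimpleGraph.mem_edgeFinset.mp
              (Finset.mem_filter.mp (Finset.mem_sdiff.mp h).1).1
        · intro v
          have hfe : ((EB \ EC) ∪ (EC \ EB)).filter (fun e => v ∈ e)
              = ((EB.filter (fun e => v ∈ e)) \ (EC.filter (fun e => v ∈ e)))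
                ∪ ((EC.filter (fun e => v ∈ e)) \ (EB.filter (fun e => v ∈ e))) := by
            ext e
            simp only [Finset.mem_union, Finset.mem_sdiff, Finset.mem_filter]
            tauto
          rw [hfe, Finset.card_union_of_disjoint disjoint_sdiff_sdiff]
          have i1 := Finset.card_sdiff_add_card_inter
            (EB.filter (fun e => v ∈ e)) (EC.filter (fun e => v ∈ e))
          have i2 := Finset.card_sdiff_add_card_inter
            (EC.filter (fun e => v ∈ e)) (EB.filter (fun e => v ∈ e))
          have i3 : ((EC.filter (fun e => v ∈ e)) ∩ (EB.filter (fun e => v ∈ e))).card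
              = ((EB.filter (fun e => v ∈ e)) ∩ (EC.filter (fun e => v ∈ e))).card := by
            rw [Finset.inter_comm]
          have i4 := hpar v
          rw [Nat.even_iff]
          omega
      have h5 : EB \ EC = ∅ := by
        rcases Finset.union_eq_empty.mp hD with ⟨h, _⟩
        exact h
      have h6 : EC \ EB = ∅ := by
        rcases Finset.union_eq_empty.mp hD with ⟨_, h⟩
        exact h
      exact Finset.Subset.antisymm
        (Finset.sdiff_eq_empty_iff_subset.mp h5)
        (Finset.sdiff_eq_empty_iff_subset.mp h6)
    exact Finset.Subset.antisymm
      (fun n hn => hmain B C hB hC hfw hES n hn)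
      (fun n hn => hmain C B hC hB (fun w => (hfw w).symm) hES.symm n hn)
  -- Part 3 : cardinality
  have hAfin : A.Finite := (Set.finite_Icc 1 N).subset part1
  haveI : Fintype ↥T.edgeSet := Fintype.ofFinite _
  have hedgecount : T.edgeFinset.card + 1
      = Fintype.card {p : ℕ // p.Prime ∧ (p : ℝ) ≤ r} := hT.card_edgeFinset
  have hPiR : primePi r = Nat.card {p : ℕ // p.Prime ∧ (p : ℝ) ≤ r} := by
    rw [primePi, ← Nat.card_coe_set_eq]
    rfl
  have hNatFin : Nat.card {p : ℕ // p.Prime ∧ (p : ℝ) ≤ r}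
      = Fintype.card {p : ℕ // p.Prime ∧ (p : ℝ) ≤ r} := Nat.card_eq_fintype_card
  have hinj2 : Function.Injective (fun p : {p : ℕ // p.Prime ∧ (p : ℝ) ≤ r} => (p : ℕ) ^ 2) := by
    intro a b h
    exact Subtype.ext (Nat.pow_left_injective two_ne_zero h)
  have hQ : {n : ℕ | ∃ p : {p : ℕ // p.Prime ∧ (p : ℝ) ≤ r}, n = (p : ℕ) ^ 2}.ncard
      = Nat.card {p : ℕ // p.Prime ∧ (p : ℝ) ≤ r} := by
    have himg : {n : ℕ | ∃ p : {p : ℕ // p.Prime ∧ (p : ℝ) ≤ r}, n = (p : ℕ) ^ 2}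
        = (fun p : {p : ℕ // p.Prime ∧ (p : ℝ) ≤ r} => (p : ℕ) ^ 2) '' Set.univ := by
      ext n
      simp [eq_comm]
    rw [himg, Set.ncard_image_of_injective _ hinj2, Set.ncard_univ]
  have hE : {n : ℕ | ∃ e ∈ T.edgeSet, n = g e}.ncard = T.edgeFinset.card := by
    have himg : {n : ℕ | ∃ e ∈ T.edgeSet, n = g e} = g '' T.edgeSet := by
      ext n
      simp [eq_comm]
    rw [himg, Set.ncard_image_of_injective _ hginj, Set.ncard_eq_toFinset_card']
    congr 1
  have hLpart : {n : ℕ | n.Prime ∧ r < (n : ℝ) ∧ n ≤ N}.ncard + primePi r = primePi N := by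
    have hu : {p : ℕ | p.Prime ∧ (p : ℝ) ≤ (N : ℝ)}
        = {n : ℕ | n.Prime ∧ r < (n : ℝ) ∧ n ≤ N} ∪ {p : ℕ | p.Prime ∧ (p : ℝ) ≤ r} := by
      ext p
      simp only [Set.mem_union, Set.mem_setOf_eq]
      constructor
      · rintro ⟨hp, hpN⟩
        by_cases h : (p : ℝ) ≤ r
        · exact Or.inr ⟨hp, h⟩
        · exact Or.inl ⟨hp, not_le.mp h, by exact_mod_cast hpN⟩
      · rintro (⟨hp, _, hpN⟩ | ⟨hp, hpr⟩)
        · exact ⟨hp, by exact_mod_cast hpN⟩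
        · exact ⟨hp, le_trans hpr hrN⟩
    have hfin1 : {n : ℕ | n.Prime ∧ r < (n : ℝ) ∧ n ≤ N}.Finite :=
      (Set.finite_Iic N).subset (fun p hp => hp.2.2)
    have hfin2 : {p : ℕ | p.Prime ∧ (p : ℝ) ≤ r}.Finite := by
      refine (Set.finite_Iic N).subset (fun p hp => ?_)
      have : (p : ℝ) ≤ (N : ℝ) := le_trans hp.2 hrN
      exact_mod_cast this
    have hdisj : Disjoint {n : ℕ | n.Prime ∧ r < (n : ℝ) ∧ n ≤ N}
        {p : ℕ | p.Prime ∧ (p : ℝ) ≤ r} := by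
      rw [Set.disjoint_left]
      rintro p ⟨_, hlt, _⟩ ⟨_, hle⟩
      exact absurd hle (not_le.mpr hlt)
    rw [primePi, primePi, hu, Set.ncard_union_eq hdisj hfin1 hfin2]
  -- splitting A
  have hsplit : A = {n : ℕ | n.Prime ∧ r < (n : ℝ) ∧ n ≤ N}
      ∪ ({n : ℕ | ∃ p : {p : ℕ // p.Prime ∧ (p : ℝ) ≤ r}, n = (p : ℕ) ^ 2}
        ∪ {n : ℕ | ∃ e ∈ T.edgeSet, n = g e}) := by
    rw [hA]
    ext n
    simp only [Set.mem_union, Set.mem_setOf_eq]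
    constructor
    · rintro (h | ⟨p, h1, h2, h3⟩ | ⟨p, q, hadj, h⟩)
      · exact Or.inl h
      · exact Or.inr (Or.inl ⟨⟨p, h1, h2⟩, h3⟩)
      · exact Or.inr (Or.inr ⟨s(p, q), T.mem_edgeSet.mpr hadj, h⟩)
    · rintro (h | ⟨p, rfl⟩ | ⟨e, he, rfl⟩)
      · exact Or.inl h
      · exact Or.inr (Or.inl ⟨(p : ℕ), p.2.1, p.2.2, rfl⟩)
      · induction e using Sym2.ind with
        | _ p q =>
        exact Or.inr (Or.inr ⟨p, q, T.mem_edgeSet.mp he, (hgmk p q).symm ▸ rfl⟩)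
  -- the three parts are subsets of A, hence finite
  have hsubL : {n : ℕ | n.Prime ∧ r < (n : ℝ) ∧ n ≤ N} ⊆ A := by
    rw [hsplit]; exact Set.subset_union_left
  have hsubQ : {n : ℕ | ∃ p : {p : ℕ // p.Prime ∧ (p : ℝ) ≤ r}, n = (p : ℕ) ^ 2} ⊆ A := by
    rw [hsplit]; exact Set.subset_union_of_subset_right Set.subset_union_left _
  have hsubE : {n : ℕ | ∃ e ∈ T.edgeSet, n = g e} ⊆ A := by
    rw [hsplit]; exact Set.subset_union_of_subset_right Set.subset_union_right _
  -- disjointness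
  have hd2 : Disjoint {n : ℕ | ∃ p : {p : ℕ // p.Prime ∧ (p : ℝ) ≤ r}, n = (p : ℕ) ^ 2}
      {n : ℕ | ∃ e ∈ T.edgeSet, n = g e} := by
    rw [Set.disjoint_left]
    rintro n ⟨p, rfl⟩ ⟨e, he, heq⟩
    induction e using Sym2.ind with
    | _ a b =>
    have hab : a ≠ b := fun h =>
      T.not_isDiag_of_mem_edgeSet he (by rw [h]; exact Sym2.mk_isDiag_iff.mpr rfl)
    rw [hgmk] at heq
    exact sq_ne_mul p.2.1 a.2.1 b.2.1 (fun h => hab (Subtype.ext h)) heq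
  have hd1 : Disjoint {n : ℕ | n.Prime ∧ r < (n : ℝ) ∧ n ≤ N}
      ({n : ℕ | ∃ p : {p : ℕ // p.Prime ∧ (p : ℝ) ≤ r}, n = (p : ℕ) ^ 2}
        ∪ {n : ℕ | ∃ e ∈ T.edgeSet, n = g e}) := by
    rw [Set.disjoint_left]
    rintro n ⟨hp, -, -⟩ (⟨p, rfl⟩ | ⟨e, he, rfl⟩)
    · exact sq_not_prime p.2.1 hp
    · induction e using Sym2.ind with
      | _ a b =>
      rw [hgmk] at hp
      exact mul_not_prime a.2.1 b.2.1 hp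
  have hcardA : A.ncard = {n : ℕ | n.Prime ∧ r < (n : ℝ) ∧ n ≤ N}.ncard
      + ({n : ℕ | ∃ p : {p : ℕ // p.Prime ∧ (p : ℝ) ≤ r}, n = (p : ℕ) ^ 2}.ncard
        + {n : ℕ | ∃ e ∈ T.edgeSet, n = g e}.ncard) := by
    rw [hsplit, Set.ncard_union_eq hd1 (hAfin.subset hsubL)
      ((hAfin.subset hsubQ).union (hAfin.subset hsubE)),
      Set.ncard_union_eq hd2 (hAfin.subset hsubQ) (hAfin.subset hsubE)]
  refine ⟨part1, part2, ?_⟩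
  rw [hcardA, hQ, hE]
  omega

/-- Given a tree `T` whose vertices are the primes at most `N^{1/2}`, the set consisting
of the primes in `(N^{1/2}, N]`, the squares `p²` of primes `p ≤ N^{1/2}`, and the
products `p·q` over edges `{p, q}` of `T`, is a subset of `[N]` with distinct subset
products and has exactly `π(N) + π(N^{1/2}) − 1` elements. -/
theorem stmt18 (N : ℕ) (hN : 4 ≤ N)
    (T : SimpleGraph {p : ℕ // p.Prime ∧ (p : ℝ) ≤ (N : ℝ) ^ ((1 : ℝ) / 2)})
    (hT : T.IsTree) :
    ∀ A : Set ℕ,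
      A = {n : ℕ | (n.Prime ∧ (N : ℝ) ^ ((1 : ℝ) / 2) < (n : ℝ) ∧ n ≤ N) ∨
        (∃ p : ℕ, p.Prime ∧ (p : ℝ) ≤ (N : ℝ) ^ ((1 : ℝ) / 2) ∧ n = p ^ 2) ∨
        (∃ p q : {p : ℕ // p.Prime ∧ (p : ℝ) ≤ (N : ℝ) ^ ((1 : ℝ) / 2)},
          T.Adj p q ∧ n = (p : ℕ) * (q : ℕ))} →
      A ⊆ Set.Icc 1 N ∧ DistinctSubsetProds A ∧
        A.ncard + 1 = primePi N + primePi ((N : ℝ) ^ ((1 : ℝ) / 2)) := by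
  have hr0 : (0:ℝ) ≤ (N : ℝ) ^ ((1 : ℝ) / 2) :=
    Real.rpow_nonneg (by positivity) _
  have hrr : (N : ℝ) ^ ((1 : ℝ) / 2) * (N : ℝ) ^ ((1 : ℝ) / 2) = N := by
    rw [← Real.rpow_add (by positivity : (0:ℝ) < N)]
    norm_num
  exact aux18 N hN _ hr0 hrr T hT
end
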